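/- arXiv:2404.08470 — 6 statements merged into one kernel-verified Lean document; each statement's English description precedes it below -/
import Mathlib

section
/- For every positive integer n, the sum over all permutations σ of [n] of x^{asc(σ)} equals the sum over all permutations σ of [n] of x^{exc(σ)}, where asc(σ) is the number of indices 1 ≤ i ≤ n−1 with σ(i) < σ(i+1) and exc(σ) is the number of indices i with σ(i) > i. -/
open Finset

/-- The word of a permutation in one-line notation, 1-based positions,
with value 0 outside positions `1..n` (boundary convention). -/
def wrd {n : ℕ} (σ : Equiv.Perm (Fin n)) (i : ℕ) : ℕ :=
  if h : 1 ≤ i ∧ i ≤ n then ((σ ⟨i - 1, by omega⟩ : Fin n) : ℕ) + 1 else 0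

/-- Number of ascents of σ: indices 1 ≤ i ≤ n−1 with σ(i) < σ(i+1). -/
def permAsc {n : ℕ} (σ : Equiv.Perm (Fin n)) : ℕ :=
  ((Finset.Icc 1 (n - 1)).filter fun i => wrd σ i < wrd σ (i + 1)).card

/-- Number of excedances of σ: indices i with σ(i) > i. -/
def permExc {n : ℕ} (σ : Equiv.Perm (Fin n)) : ℕ :=
  (Finset.univ.filter fun i : Fin n => i < σ i).card

namespace FoataAux

variable {n : ℕ}

/-- 0-based value of σ at position i, as a natural number (0 out of range). -/
def v (σ : Equiv.Perm (Fin n)) (i : ℕ) : ℕ :=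
  if h : i < n then (σ ⟨i, h⟩ : ℕ) else 0

lemma v_mk (σ : Equiv.Perm (Fin n)) {i : ℕ} (h : i < n) : v σ i = (σ ⟨i, h⟩ : ℕ) := by
  simp [v, h]

/-- `j` is a position of a left-to-right maximum. -/
def IsM (σ : Equiv.Perm (Fin n)) (j : ℕ) : Prop :=
  j < n ∧ ∀ k < j, v σ k < v σ j

instance (σ : Equiv.Perm (Fin n)) : DecidablePred (IsM σ) := fun _ =>
  inferInstanceAs (Decidable (_ ∧ _))

lemma isM_zero (σ : Equiv.Perm (Fin n)) (hn : 0 < n) : IsM σ 0 :=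
  ⟨hn, fun k hk => absurd hk (Nat.not_lt_zero k)⟩

/-- The position of the last left-to-right maximum at or before `j`. -/
def ldr (σ : Equiv.Perm (Fin n)) (j : ℕ) : ℕ := Nat.findGreatest (IsM σ) j

lemma ldr_le (σ : Equiv.Perm (Fin n)) (j : ℕ) : ldr σ j ≤ j := Nat.findGreatest_le j

lemma ldr_lt (σ : Equiv.Perm (Fin n)) {j : ℕ} (hj : j < n) : ldr σ j < n :=
  lt_of_le_of_lt (ldr_le σ j) hj

lemma isM_ldr (σ : Equiv.Perm (Fin n)) (hn : 0 < n) (j : ℕ) : IsM σ (ldr σ j) :=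
  Nat.findGreatest_spec (Nat.zero_le j) (isM_zero σ hn)

lemma le_ldr {σ : Equiv.Perm (Fin n)} {m j : ℕ} (h : IsM σ m) (hmj : m ≤ j) : m ≤ ldr σ j :=
  Nat.le_findGreatest hmj h

lemma ldr_isM {σ : Equiv.Perm (Fin n)} {m : ℕ} (h : IsM σ m) : ldr σ m = m :=
  le_antisymm (ldr_le σ m) (le_ldr h le_rfl)

lemma not_isM_between {σ : Equiv.Perm (Fin n)} {j m : ℕ} (h1 : ldr σ j < m) (h2 : m ≤ j) :
    ¬ IsM σ m := Nat.findGreatest_is_greatest h1 h2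

lemma ldr_succ_of_not {σ : Equiv.Perm (Fin n)} {j : ℕ} (h : ¬ IsM σ (j + 1)) :
    ldr σ (j + 1) = ldr σ j := by
  simp [ldr, Nat.findGreatest_succ, h]

lemma ldr_mono (σ : Equiv.Perm (Fin n)) (hn : 0 < n) {j j' : ℕ} (h : j ≤ j') :
    ldr σ j ≤ ldr σ j' :=
  le_ldr (isM_ldr σ hn j) ((ldr_le σ j).trans h)

/-- The value at any position is at most the value at the leader of that position. -/
lemma v_le_ldr (σ : Equiv.Perm (Fin n)) : ∀ k, k < n → v σ k ≤ v σ (ldr σ k) := by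
  intro k
  induction k using Nat.strong_induction_on with
  | _ k IH =>
    intro hk
    have hn : 0 < n := by omega
    by_cases hM : IsM σ k
    · rw [ldr_isM hM]
    · have hex : ∃ l < k, v σ k ≤ v σ l := by
        by_contra hc
        push_neg at hc
        exact hM ⟨hk, fun l hl => hc l hl⟩
      obtain ⟨l, hlk, hle⟩ := hex
      have h1 : v σ l ≤ v σ (ldr σ l) := IH l hlk (lt_trans hlk hk)
      have h2 : v σ (ldr σ l) ≤ v σ (ldr σ k) := by
        rcases eq_or_lt_of_le (ldr_mono σ hn (le_of_lt hlk)) with he | hlt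
        · rw [he]
        · exact le_of_lt ((isM_ldr σ hn k).2 _ hlt)
      omega

/-- The underlying function of the Foata transform. -/
def gfun (σ : Equiv.Perm (Fin n)) (a : Fin n) : Fin n :=
  if h : ((σ.symm a : Fin n) : ℕ) + 1 < n ∧ ¬ IsM σ (((σ.symm a : Fin n) : ℕ) + 1) then
    σ ⟨((σ.symm a : Fin n) : ℕ) + 1, h.1⟩
  else
    σ ⟨ldr σ ((σ.symm a : Fin n) : ℕ), ldr_lt σ (σ.symm a).isLt⟩

lemma gfun_nonend {σ : Equiv.Perm (Fin n)} {j : ℕ} (hj : j < n) (h1 : j + 1 < n)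
    (h2 : ¬ IsM σ (j + 1)) : gfun σ (σ ⟨j, hj⟩) = σ ⟨j + 1, h1⟩ := by
  have hs : σ.symm (σ ⟨j, hj⟩) = ⟨j, hj⟩ := σ.symm_apply_apply _
  simp only [gfun, hs]
  rw [dif_pos ⟨h1, h2⟩]

lemma gfun_end {σ : Equiv.Perm (Fin n)} {j : ℕ} (hj : j < n)
    (h : ¬ (j + 1 < n ∧ ¬ IsM σ (j + 1))) :
    gfun σ (σ ⟨j, hj⟩) = σ ⟨ldr σ j, ldr_lt σ hj⟩ := by
  have hs : σ.symm (σ ⟨j, hj⟩) = ⟨j, hj⟩ := σ.symm_apply_apply _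
  simp only [gfun, hs]
  rw [dif_neg h]

lemma gfun_inj (σ : Equiv.Perm (Fin n)) : Function.Injective (gfun σ) := by
  have key : ∀ (j j' : ℕ), j < n → j' < n →
      ¬ (j + 1 < n ∧ ¬ IsM σ (j + 1)) → ¬ (j' + 1 < n ∧ ¬ IsM σ (j' + 1)) →
      ldr σ j = ldr σ j' → j < j' → False := by
    intro j j' hj hj' hE hE' hl hlt
    have h1 : j + 1 < n := by omega
    have hM : IsM σ (j + 1) := by
      by_contra hc
      exact hE ⟨h1, hc⟩
    have h2 : j + 1 ≤ ldr σ j' := le_ldr hM (by omega)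
    have h3 : ldr σ j ≤ j := ldr_le σ j
    omega
  intro a b hab
  have ha : a = σ ⟨((σ.symm a : Fin n) : ℕ), (σ.symm a).isLt⟩ := by
    rw [Fin.eta]; exact (σ.apply_symm_apply a).symm
  have hb : b = σ ⟨((σ.symm b : Fin n) : ℕ), (σ.symm b).isLt⟩ := by
    rw [Fin.eta]; exact (σ.apply_symm_apply b).symm
  set j := ((σ.symm a : Fin n) : ℕ) with hjd
  set j' := ((σ.symm b : Fin n) : ℕ) with hjd'
  have hj : j < n := (σ.symm a).isLt
  have hj' : j' < n := (σ.symm b).isLt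
  suffices hjj : j = j' by
    rw [ha, hb]; congr 1; exact Fin.ext hjj
  by_cases hE : j + 1 < n ∧ ¬ IsM σ (j + 1) <;>
    by_cases hE' : j' + 1 < n ∧ ¬ IsM σ (j' + 1)
  · rw [ha, gfun_nonend hj hE.1 hE.2, hb, gfun_nonend hj' hE'.1 hE'.2] at hab
    have := σ.injective hab
    simpa using congrArg Fin.val this
  · rw [ha, gfun_nonend hj hE.1 hE.2, hb, gfun_end hj' hE'] at hab
    have h5 := σ.injective hab
    have hv : j + 1 = ldr σ j' := by simpa using congrArg Fin.val h5
    exfalso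
    have hn : 0 < n := by omega
    exact hE.2 (hv ▸ isM_ldr σ hn j')
  · rw [ha, gfun_end hj hE, hb, gfun_nonend hj' hE'.1 hE'.2] at hab
    have h5 := σ.injective hab
    have hv : ldr σ j = j' + 1 := by simpa using congrArg Fin.val h5
    exfalso
    have hn : 0 < n := by omega
    exact hE'.2 (hv ▸ isM_ldr σ hn j)
  · rw [ha, gfun_end hj hE, hb, gfun_end hj' hE'] at hab
    have h5 := σ.injective hab
    have hv : ldr σ j = ldr σ j' := by simpa using congrArg Fin.val h5
    rcases lt_trichotomy j j' with h | h | h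
    · exact absurd (key j j' hj hj' hE hE' hv h) not_false
    · exact h
    · exact absurd (key j' j hj' hj hE' hE hv.symm h) not_false

/-- Foata's fundamental transform (word to cycle form). -/
noncomputable def foata (σ : Equiv.Perm (Fin n)) : Equiv.Perm (Fin n) :=
  Equiv.ofBijective (gfun σ) ((Finite.injective_iff_bijective).mp (gfun_inj σ))

lemma foata_nonend {σ : Equiv.Perm (Fin n)} {j : ℕ} (hj : j < n) (h1 : j + 1 < n)
    (h2 : ¬ IsM σ (j + 1)) : foata σ (σ ⟨j, hj⟩) = σ ⟨j + 1, h1⟩ :=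
  gfun_nonend hj h1 h2

lemma foata_end {σ : Equiv.Perm (Fin n)} {j : ℕ} (hj : j < n)
    (h : ¬ (j + 1 < n ∧ ¬ IsM σ (j + 1))) :
    foata σ (σ ⟨j, hj⟩) = σ ⟨ldr σ j, ldr_lt σ hj⟩ :=
  gfun_end hj h

/-- Iterating foata along a block. -/
lemma foata_pow {σ : Equiv.Perm (Fin n)} {m k : ℕ} (hk : k < n) (hm : m ≤ k)
    (h : ∀ i, m < i → i ≤ k → ¬ IsM σ i) :
    ((foata σ) ^ (k - m)) (σ ⟨m, lt_of_le_of_lt hm hk⟩) = σ ⟨k, hk⟩ := by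
  induction k, hm using Nat.le_induction with
  | base => simp
  | succ k hmk IH =>
    have hk' : k < n := by omega
    have hd : k + 1 - m = (k - m) + 1 := by omega
    rw [hd, pow_succ', Equiv.Perm.mul_apply]
    have e1 : ((foata σ) ^ (k - m)) (σ ⟨m, by omega⟩) = σ ⟨k, hk'⟩ :=
      IH hk' (fun i h1 h2 => h i h1 (by omega))
    rw [e1]
    exact foata_nonend hk' hk (h (k + 1) (by omega) le_rfl)

lemma sameCycle_ldr {σ : Equiv.Perm (Fin n)} {k : ℕ} (hk : k < n) :
    (foata σ).SameCycle (σ ⟨ldr σ k, ldr_lt σ hk⟩) (σ ⟨k, hk⟩) := by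
  refine ⟨((k - ldr σ k : ℕ) : ℤ), ?_⟩
  rw [zpow_natCast]
  exact foata_pow hk (ldr_le σ k) (fun i h1 h2 => not_isM_between h1 h2)

/-- Everything in the same foata-cycle as σ(k) has value at most v σ (ldr σ k). -/
lemma cycle_bound {σ : Equiv.Perm (Fin n)} {k : ℕ} (hk : k < n) :
    ∀ b : Fin n, (foata σ).SameCycle (σ ⟨k, hk⟩) b → (b : ℕ) ≤ v σ (ldr σ k) := by
  have hn : 0 < n := by omega
  have block : ∀ i : ℕ, ∀ b : Fin n,
      ((foata σ) ^ i) (σ ⟨k, hk⟩) = b →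
      ∃ k' : ℕ, ∃ hk' : k' < n, ldr σ k' = ldr σ k ∧ b = σ ⟨k', hk'⟩ := by
    intro i
    induction i with
    | zero => intro b hb; exact ⟨k, hk, rfl, hb.symm⟩
    | succ i IH =>
      intro b hb
      obtain ⟨k', hk', hldr, hb'⟩ := IH _ rfl
      rw [pow_succ', Equiv.Perm.mul_apply, hb'] at hb
      by_cases hE : k' + 1 < n ∧ ¬ IsM σ (k' + 1)
      · rw [foata_nonend hk' hE.1 hE.2] at hb
        exact ⟨k' + 1, hE.1, by rw [ldr_succ_of_not hE.2, hldr], hb.symm⟩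
      · rw [foata_end hk' hE] at hb
        exact ⟨ldr σ k', ldr_lt σ hk', by rw [ldr_isM (isM_ldr σ hn k'), hldr], hb.symm⟩
  intro b hsc
  obtain ⟨i, _, hi⟩ := Equiv.Perm.SameCycle.exists_pow_eq' hsc
  obtain ⟨k', hk', hldr, hb⟩ := block i b hi
  rw [hb, ← v_mk σ hk', ← hldr]
  exact v_le_ldr σ k' hk'

/-! ### Injectivity of foata -/

lemma status_aux {σ σ' : Equiv.Perm (Fin n)} (hτ : foata σ = foata σ') {l : ℕ}
    (hl1 : l + 1 < n)
    (pf : ∀ m, ∀ hm : m ≤ l, σ ⟨m, by omega⟩ = σ' ⟨m, by omega⟩)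
    (h1 : IsM σ (l + 1)) : IsM σ' (l + 1) := by
  by_contra h2
  have hl : l < n := by omega
  have e1 : foata σ' (σ' ⟨l, hl⟩) = σ' ⟨l + 1, hl1⟩ := foata_nonend hl hl1 h2
  have e2 : foata σ (σ ⟨l, hl⟩) = σ ⟨ldr σ l, ldr_lt σ hl⟩ :=
    foata_end hl (by intro hc; exact hc.2 h1)
  rw [pf l le_rfl, hτ, e1] at e2
  have e3 : σ ⟨ldr σ l, ldr_lt σ hl⟩ = σ' ⟨ldr σ l, ldr_lt σ hl⟩ :=
    pf (ldr σ l) (ldr_le σ l)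
  rw [e3] at e2
  have h5 := σ'.injective e2
  have hv : l + 1 = ldr σ l := by simpa using congrArg Fin.val h5
  have := ldr_le σ l
  omega

lemma le_aux {σ σ' : Equiv.Perm (Fin n)} (hτ : foata σ = foata σ') {j : ℕ} (hj : j < n)
    (pf : ∀ m, ∀ hm : m < j, σ ⟨m, by omega⟩ = σ' ⟨m, by omega⟩)
    (h1 : IsM σ j) (h2 : IsM σ' j) : (σ ⟨j, hj⟩ : ℕ) ≤ (σ' ⟨j, hj⟩ : ℕ) := by
  have hn : 0 < n := by omega
  set a' : Fin n := σ' ⟨j, hj⟩ with ha'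
  set k : ℕ := ((σ.symm a' : Fin n) : ℕ) with hkd
  have hk : k < n := (σ.symm a').isLt
  have hka : σ ⟨k, hk⟩ = a' := by
    rw [show (⟨k, hk⟩ : Fin n) = σ.symm a' from Fin.eta _ _]
    exact σ.apply_symm_apply a'
  have hjk : j ≤ k := by
    by_contra hc
    push_neg at hc
    have h3 : σ ⟨k, hk⟩ = σ' ⟨k, hk⟩ := pf k hc
    rw [hka] at h3
    have h4 := σ'.injective h3
    have : j = k := by simpa using congrArg Fin.val h4
    omega
  set m : ℕ := ldr σ k with hmd
  have hm : m < n := ldr_lt σ hk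
  have hjm : j ≤ m := le_ldr h1 hjk
  have step1 : v σ j ≤ v σ m := by
    rcases eq_or_lt_of_le hjm with he | hlt
    · rw [he]
    · exact le_of_lt ((isM_ldr σ hn k).2 j hlt)
  have hsc : (foata σ').SameCycle (σ' ⟨j, hj⟩) (σ ⟨m, hm⟩) := by
    rw [← hτ, ← ha', ← hka]
    exact (sameCycle_ldr hk).symm
  have step2 : ((σ ⟨m, hm⟩ : Fin n) : ℕ) ≤ v σ' (ldr σ' j) := cycle_bound hj _ hsc
  rw [ldr_isM h2, v_mk σ' hj] at step2
  rw [v_mk σ hj, v_mk σ hm] at step1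
  omega

lemma key {σ σ' : Equiv.Perm (Fin n)} (hτ : foata σ = foata σ') :
    ∀ j, ∀ hj : j < n, σ ⟨j, hj⟩ = σ' ⟨j, hj⟩ := by
  intro j
  induction j using Nat.strong_induction_on with
  | _ j IH =>
    intro hj
    have hn : 0 < n := by omega
    have hstat : IsM σ j ↔ IsM σ' j := by
      rcases Nat.eq_zero_or_pos j with rfl | hp
      · exact ⟨fun _ => isM_zero σ' hn, fun _ => isM_zero σ hn⟩
      · obtain ⟨l, rfl⟩ : ∃ l, j = l + 1 := ⟨j - 1, by omega⟩
        constructor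
        · exact status_aux hτ hj (fun m hm => IH m (by omega) (by omega))
        · exact status_aux hτ.symm hj (fun m hm => (IH m (by omega) (by omega)).symm)
    by_cases hM : IsM σ j
    · have hM' : IsM σ' j := hstat.mp hM
      have le1 := le_aux hτ hj (fun m hm => IH m hm (by omega)) hM hM'
      have le2 := le_aux hτ.symm hj (fun m hm => (IH m hm (by omega)).symm) hM' hM
      exact Fin.val_injective (le_antisymm le1 le2)
    · have hM' : ¬ IsM σ' j := fun h => hM (hstat.mpr h)
      have hp : 0 < j := by
        by_contra hc
        exact hM (by simpa [show j = 0 by omega] using isM_zero σ hn)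
      obtain ⟨l, rfl⟩ : ∃ l, j = l + 1 := ⟨j - 1, by omega⟩
      have hl : l < n := by omega
      have e1 : foata σ (σ ⟨l, hl⟩) = σ ⟨l + 1, hj⟩ := foata_nonend hl hj hM
      have e2 : foata σ' (σ' ⟨l, hl⟩) = σ' ⟨l + 1, hj⟩ := foata_nonend hl hj hM'
      rw [← e1, ← e2, IH l (by omega) hl, hτ]

lemma foata_inj : Function.Injective (foata : Equiv.Perm (Fin n) → Equiv.Perm (Fin n)) := by
  intro σ σ' h
  ext a
  have h2 := key h a.val a.isLt
  simpa [Fin.eta] using congrArg Fin.val h2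

lemma foata_bij : Function.Bijective (foata : Equiv.Perm (Fin n) → Equiv.Perm (Fin n)) :=
  Finite.injective_iff_bijective.mp foata_inj

/-! ### Statistics -/

/-- Number of descents (0-based positions). -/
def desB (σ : Equiv.Perm (Fin n)) : ℕ :=
  ((Finset.range (n - 1)).filter fun j => v σ (j + 1) < v σ j).card

/-- Number of anti-excedances. -/
def aexc (σ : Equiv.Perm (Fin n)) : ℕ :=
  (Finset.univ.filter fun a : Fin n => σ a < a).card

lemma aexc_foata (σ : Equiv.Perm (Fin n)) : aexc (foata σ) = desB σ := by
  classical
  have hchar : ∀ a : Fin n, (foata σ a < a) ↔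
      (((σ.symm a : Fin n) : ℕ) + 1 < n ∧
        v σ (((σ.symm a : Fin n) : ℕ) + 1) < v σ ((σ.symm a : Fin n) : ℕ)) := by
    intro a
    set j : ℕ := ((σ.symm a : Fin n) : ℕ) with hjd
    have hjn : j < n := (σ.symm a).isLt
    have ha : σ ⟨j, hjn⟩ = a := by
      rw [show (⟨j, hjn⟩ : Fin n) = σ.symm a from Fin.eta _ _]
      exact σ.apply_symm_apply a
    by_cases hE : j + 1 < n ∧ ¬ IsM σ (j + 1)
    · rw [← ha, foata_nonend hjn hE.1 hE.2]
      rw [v_mk σ hE.1, v_mk σ hjn]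
      exact ⟨fun h => ⟨hE.1, h⟩, fun h => h.2⟩
    · rw [← ha, foata_end hjn hE]
      constructor
      · intro h
        exfalso
        have hle : v σ j ≤ v σ (ldr σ j) := v_le_ldr σ j hjn
        rw [v_mk σ hjn, v_mk σ (ldr_lt σ hjn)] at hle
        exact absurd h (not_lt.mpr hle)
      · intro h
        exfalso
        rcases Classical.em (j + 1 < n) with h1 | h1
        · have hM : IsM σ (j + 1) := by
            by_contra hc; exact hE ⟨h1, hc⟩
          have h3 := hM.2 j (by omega)
          have h4 := h.2
          omega
        · exact h1 h.1
  unfold aexc desB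
  refine Finset.card_bij (fun a _ => ((σ.symm a : Fin n) : ℕ)) ?_ ?_ ?_
  · intro a haf
    rw [Finset.mem_filter] at haf
    have h := (hchar a).mp haf.2
    show ((σ.symm a : Fin n) : ℕ) ∈ _
    rw [Finset.mem_filter, Finset.mem_range]
    exact ⟨by omega, h.2⟩
  · intro a _ b _ hab
    exact σ.symm.injective (Fin.val_injective hab)
  · intro j hjf
    rw [Finset.mem_filter, Finset.mem_range] at hjf
    have hjn : j < n := by omega
    refine ⟨σ ⟨j, hjn⟩, ?_, ?_⟩
    · rw [Finset.mem_filter]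
      refine ⟨Finset.mem_univ _, (hchar _).mpr ?_⟩
      rw [σ.symm_apply_apply]
      exact ⟨by simp; omega, by show v σ (j + 1) < v σ (⟨j, hjn⟩ : Fin n); exact hjf.2⟩
    · show ((σ.symm (σ ⟨j, hjn⟩) : Fin n) : ℕ) = j
      rw [σ.symm_apply_apply]

/-! ### Reversal: ascents to descents -/

lemma wrd_eq (σ : Equiv.Perm (Fin n)) {i : ℕ} (h1 : 1 ≤ i) (h2 : i ≤ n) :
    wrd σ i = v σ (i - 1) + 1 := by
  rw [wrd, dif_pos ⟨h1, h2⟩, v_mk σ (show i - 1 < n by omega)]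

lemma v_rev (σ : Equiv.Perm (Fin n)) {k : ℕ} (hk : k < n) :
    v (σ * Fin.revPerm) k = v σ (n - 1 - k) := by
  rw [v_mk _ hk, v_mk σ (show n - 1 - k < n by omega)]
  have hr : (Fin.revPerm (⟨k, hk⟩ : Fin n) : Fin n) = ⟨n - 1 - k, by omega⟩ := by
    ext
    simp [Fin.val_rev]
    omega
  rw [Equiv.Perm.mul_apply, hr]

lemma permAsc_rev (σ : Equiv.Perm (Fin n)) : permAsc (σ * Fin.revPerm) = desB σ := by
  unfold permAsc desB
  refine Finset.card_bij (fun i _ => n - 1 - i) ?_ ?_ ?_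
  · intro i hif
    rw [Finset.mem_filter, Finset.mem_Icc] at hif
    obtain ⟨⟨hi1, hi2⟩, hcond⟩ := hif
    show n - 1 - i ∈ _
    rw [Finset.mem_filter, Finset.mem_range]
    have hn2 : 2 ≤ n := by omega
    rw [wrd_eq _ hi1 (by omega), wrd_eq _ (by omega) (by omega)] at hcond
    rw [v_rev σ (show i - 1 < n by omega), v_rev σ (show i + 1 - 1 < n by omega)] at hcond
    have e1 : n - 1 - (i - 1) = n - i := by omega
    have e2 : n - 1 - (i + 1 - 1) = n - 1 - i := by omega
    rw [e1, e2] at hcond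
    refine ⟨by omega, ?_⟩
    have e3 : n - 1 - i + 1 = n - i := by omega
    rw [e3]
    omega
  · intro a ha b hb hab
    have hab' : n - 1 - a = n - 1 - b := hab
    rw [Finset.mem_filter, Finset.mem_Icc] at ha hb
    omega
  · intro j hjf
    rw [Finset.mem_filter, Finset.mem_range] at hjf
    obtain ⟨hj, hcond⟩ := hjf
    refine ⟨n - 1 - j, ?_, by show n - 1 - (n - 1 - j) = j; omega⟩
    rw [Finset.mem_filter, Finset.mem_Icc]
    have hn2 : 2 ≤ n := by omega
    refine ⟨⟨by omega, by omega⟩, ?_⟩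
    rw [wrd_eq _ (by omega) (by omega), wrd_eq _ (by omega) (by omega)]
    rw [v_rev σ (show n - 1 - j - 1 < n by omega),
      v_rev σ (show n - 1 - j + 1 - 1 < n by omega)]
    have e1 : n - 1 - (n - 1 - j - 1) = j + 1 := by omega
    have e2 : n - 1 - (n - 1 - j + 1 - 1) = j := by omega
    rw [e1, e2]
    omega

/-! ### Inverse: anti-excedances to excedances -/

lemma aexc_inv (σ : Equiv.Perm (Fin n)) : aexc σ = permExc σ⁻¹ := by
  unfold aexc permExc
  refine Finset.card_bij (fun a _ => σ a) ?_ ?_ ?_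
  · intro a haf
    rw [Finset.mem_filter] at haf
    rw [Finset.mem_filter]
    refine ⟨Finset.mem_univ _, ?_⟩
    have : σ⁻¹ (σ a) = a := σ.symm_apply_apply a
    rw [this]
    exact haf.2
  · intro a _ b _ hab
    exact σ.injective hab
  · intro b hbf
    rw [Finset.mem_filter] at hbf
    refine ⟨σ⁻¹ b, ?_, σ.apply_symm_apply b⟩
    rw [Finset.mem_filter]
    refine ⟨Finset.mem_univ _, ?_⟩
    rw [show σ (σ⁻¹ b) = b from σ.apply_symm_apply b]
    exact hbf.2

end FoataAux

open FoataAux in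
/-- For every positive integer n, the ascent and excedance statistics
are equidistributed over the symmetric group. -/
theorem eulerian_asc_eq_exc (n : ℕ) (hn : 0 < n)
    (R : Type*) [CommRing R] (x : R) :
    ∑ σ : Equiv.Perm (Fin n), x ^ permAsc σ =
      ∑ σ : Equiv.Perm (Fin n), x ^ permExc σ := by
  have s1 : ∑ σ : Equiv.Perm (Fin n), x ^ permAsc σ =
      ∑ σ : Equiv.Perm (Fin n), x ^ desB σ := by
    refine (Fintype.sum_bijective (· * (Fin.revPerm : Equiv.Perm (Fin n)))
      (Group.mulRight_bijective _) (fun σ => x ^ desB σ) (fun σ => x ^ permAsc σ) ?_).symm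
    intro σ
    show x ^ desB σ = x ^ permAsc (σ * Fin.revPerm)
    rw [permAsc_rev]
  have s2 : ∑ σ : Equiv.Perm (Fin n), x ^ desB σ =
      ∑ σ : Equiv.Perm (Fin n), x ^ aexc σ := by
    refine Fintype.sum_bijective foata foata_bij _ _ ?_
    intro σ
    show x ^ desB σ = x ^ aexc (foata σ)
    rw [aexc_foata]
  have s3 : ∑ σ : Equiv.Perm (Fin n), x ^ aexc σ =
      ∑ σ : Equiv.Perm (Fin n), x ^ permExc σ := by
    refine Fintype.sum_bijective (·⁻¹ : Equiv.Perm (Fin n) → Equiv.Perm (Fin n))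
      (Equiv.inv (Equiv.Perm (Fin n))).bijective (fun σ => x ^ aexc σ) (fun σ => x ^ permExc σ) ?_
    intro σ
    show x ^ aexc σ = x ^ permExc σ⁻¹
    rw [aexc_inv]
  rw [s1, s2, s3]
end

section
/- Define A_{n,k}(α) = Σ over permutations σ of [n+1] with exactly k descents of α^{lmax(σ)+rmax(σ)−2}. Then for 0 ≤ k ≤ n, the recurrence A_{n+1,k}(α) = (k+α) A_{n,k}(α) + (n+1−k+α) A_{n,k−1}(α) holds, with A_{0,0}(α) = 1 and A_{0,−1}(α) = 0. -/
open Finset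
open scoped Classical
noncomputable section

/-- descents of the word σ₁…σₙ -/
def permDes {n : ℕ} (σ : Equiv.Perm (Fin n)) : ℕ :=
  ((Finset.Icc 1 (n - 1)).filter fun i => wrd σ (i + 1) < wrd σ i).card

/-- number of left-to-right maxima -/
def permLmax {n : ℕ} (σ : Equiv.Perm (Fin n)) : ℕ :=
  ((Finset.Icc 1 n).filter fun i => ∀ j ∈ Finset.Ico 1 i, wrd σ j < wrd σ i).card

/-- number of right-to-left maxima -/
def permRmax {n : ℕ} (σ : Equiv.Perm (Fin n)) : ℕ :=
  ((Finset.Icc 1 n).filter fun i => ∀ j ∈ Finset.Icc (i + 1) n, wrd σ j < wrd σ i).card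

/-- A_{n,k}(α) = Σ_{σ ∈ S_{n+1}, des σ = k} α^{lmax σ + rmax σ − 2} -/
def Apoly (R : Type*) [CommRing R] (α : R) (n k : ℕ) : R :=
  ∑ σ ∈ Finset.univ.filter (fun σ : Equiv.Perm (Fin (n + 1)) => permDes σ = k),
    α ^ (permLmax σ + permRmax σ - 2)

/-! ### Auxiliary constructions: inserting a new minimum -/

variable {n : ℕ}

def ins (σ : Equiv.Perm (Fin (n+1))) (p : Fin (n+2)) : Equiv.Perm (Fin (n+2)) :=
  (finSuccEquiv' p).trans ((Equiv.optionCongr σ).trans (finSuccEquiv (n+1)).symm)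

@[simp] lemma ins_self (σ : Equiv.Perm (Fin (n+1))) (p : Fin (n+2)) : ins σ p p = 0 := by
  simp [ins]

@[simp] lemma ins_succAbove (σ : Equiv.Perm (Fin (n+1))) (p : Fin (n+2)) (j : Fin (n+1)) :
    ins σ p (p.succAbove j) = (σ j).succ := by
  simp [ins]

lemma wrd_pos {m : ℕ} (σ : Equiv.Perm (Fin m)) {i : ℕ} (h1 : 1 ≤ i) (h2 : i ≤ m) :
    1 ≤ wrd σ i := by
  simp only [wrd, dif_pos (⟨h1, h2⟩ : 1 ≤ i ∧ i ≤ m)]; omega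

lemma wrd_ins (σ : Equiv.Perm (Fin (n+1))) (p : Fin (n+2)) {i : ℕ} (h1 : 1 ≤ i) (h2 : i ≤ n+2) :
    wrd (ins σ p) i =
      if i = (p:ℕ)+1 then 1 else if i ≤ (p:ℕ) then wrd σ i + 1 else wrd σ (i-1) + 1 := by
  have hi : wrd (ins σ p) i = ((ins σ p ⟨i - 1, by omega⟩ : Fin (n+2)) : ℕ) + 1 := by
    simp [wrd, h1, h2]
  by_cases hp : i = (p:ℕ)+1
  · have : (⟨i - 1, by omega⟩ : Fin (n+2)) = p := by
      apply Fin.ext; simp; omega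
    rw [hi, this, ins_self, if_pos hp]
    simp
  · rw [if_neg hp]
    by_cases hle : i ≤ (p:ℕ)
    · rw [if_pos hle]
      have hin : i - 1 < n + 1 := by omega
      set j : Fin (n+1) := ⟨i - 1, hin⟩ with hj
      have hcast : p.succAbove j = ⟨i - 1, by omega⟩ := by
        rw [Fin.succAbove_of_castSucc_lt]
        · rfl
        · rw [Fin.lt_def]; simp [hj]; omega
      rw [hi, ← hcast, ins_succAbove]
      have hile : i ≤ n + 1 := by have := p.isLt; omega
      have : wrd σ i = (σ j : ℕ) + 1 := by
        rw [wrd, dif_pos ⟨h1, hile⟩]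
      rw [this]; simp [Fin.val_succ]
    · rw [if_neg hle]
      have hin : i - 2 < n + 1 := by omega
      set j : Fin (n+1) := ⟨i - 2, hin⟩ with hj
      have hcast : p.succAbove j = ⟨i - 1, by omega⟩ := by
        rw [Fin.succAbove_of_le_castSucc]
        · apply Fin.ext; simp [hj]; omega
        · rw [Fin.le_def]; simp [hj]; omega
      rw [hi, ← hcast, ins_succAbove]
      have : wrd σ (i-1) = (σ j : ℕ) + 1 := by
        rw [wrd, dif_pos ⟨by omega, by omega⟩]
        have he : (⟨i - 1 - 1, by omega⟩ : Fin (n+1)) = j := Fin.ext (by simp [hj]; omega)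
        rw [he]
      rw [this]; simp [Fin.val_succ]

lemma wrd_ins_le (σ : Equiv.Perm (Fin (n+1))) (p : Fin (n+2)) {j : ℕ} (h1 : 1 ≤ j)
    (h2 : j ≤ (p:ℕ)) : wrd (ins σ p) j = wrd σ j + 1 := by
  have := p.isLt
  rw [wrd_ins σ p h1 (by omega), if_neg (by omega), if_pos h2]

lemma wrd_ins_eq (σ : Equiv.Perm (Fin (n+1))) (p : Fin (n+2)) :
    wrd (ins σ p) ((p:ℕ)+1) = 1 := by
  have := p.isLt
  rw [wrd_ins σ p (by omega) (by omega), if_pos rfl]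

lemma wrd_ins_gt (σ : Equiv.Perm (Fin (n+1))) (p : Fin (n+2)) {j : ℕ} (h1 : (p:ℕ)+2 ≤ j)
    (h2 : j ≤ n+2) : wrd (ins σ p) j = wrd σ (j-1) + 1 := by
  rw [wrd_ins σ p (by omega) h2, if_neg (by omega), if_neg (by omega)]

def shiftF (P : ℕ) (i : ℕ) : ℕ := if i ≤ P then i else i + 1

lemma shiftF_injective (P : ℕ) : Function.Injective (shiftF P) := by
  intro a b
  unfold shiftF
  split_ifs <;> omega
lemma permLmax_ins (σ : Equiv.Perm (Fin (n+1))) (p : Fin (n+2)) :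
    permLmax (ins σ p) = permLmax σ + (if (p:ℕ) = 0 then 1 else 0) := by
  have hP : (p:ℕ) ≤ n + 1 := by have := p.isLt; omega
  set P := (p:ℕ) with hPdef
  have key : ((Icc 1 (n+2)).filter fun i => ∀ j ∈ Ico 1 i, wrd (ins σ p) j < wrd (ins σ p) i)
      = (((Icc 1 (n+1)).filter fun i => ∀ j ∈ Ico 1 i, wrd σ j < wrd σ i).image (shiftF P))
        ∪ (if P = 0 then {1} else ∅) := by
    ext i
    simp only [mem_union, mem_image, mem_filter, mem_Icc, mem_Ico]
    constructor
    · rintro ⟨⟨hi1, hi2⟩, hc⟩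
      by_cases hiP : i = P + 1
      · -- i is the position of the inserted 1; must be at front
        right
        have hP0 : P = 0 := by
          by_contra hne
          have h1i : (1:ℕ) ∈ Ico 1 i := by simp; omega
          have := hc 1 ⟨le_refl 1, by omega⟩
          rw [wrd_ins_le σ p (le_refl 1) (by omega), hiP, wrd_ins_eq σ p] at this
          omega
        simp [hP0, hiP]
      · by_cases hle : i ≤ P
        · left
          refine ⟨i, ⟨⟨hi1, by omega⟩, ?_⟩, by simp [shiftF, hle]⟩
          intro j hj
          obtain ⟨hj1, hj2⟩ := hj
          have := hc j ⟨hj1, hj2⟩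
          rw [wrd_ins_le σ p hj1 (by omega), wrd_ins_le σ p hi1 hle] at this
          omega
        · left
          refine ⟨i - 1, ⟨⟨by omega, by omega⟩, ?_⟩, by simp only [shiftF, if_neg (show ¬(i - 1 ≤ P) by omega)]; omega⟩
          intro j hj
          obtain ⟨hj1, hj2⟩ := hj
          have hwi : wrd (ins σ p) i = wrd σ (i-1) + 1 := wrd_ins_gt σ p (by omega) hi2
          by_cases hjP : j ≤ P
          · have := hc j ⟨hj1, by omega⟩
            rw [wrd_ins_le σ p hj1 hjP, hwi] at this
            omega
          · have := hc (j+1) ⟨by omega, by omega⟩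
            rw [wrd_ins_gt σ p (by omega) (by omega), hwi] at this
            simp at this
            omega
    · rintro (⟨a, ⟨⟨ha1, ha2⟩, hca⟩, rfl⟩ | hr)
      · by_cases hle : a ≤ P
        · rw [show shiftF P a = a from by simp [shiftF, hle]]
          refine ⟨⟨ha1, by omega⟩, ?_⟩
          intro j hj
          obtain ⟨hj1, hj2⟩ := hj
          rw [wrd_ins_le σ p hj1 (by omega), wrd_ins_le σ p ha1 hle]
          have := hca j ⟨hj1, hj2⟩
          omega
        · rw [show shiftF P a = a + 1 from by simp [shiftF, hle]]
          refine ⟨⟨by omega, by omega⟩, ?_⟩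
          intro j hj
          obtain ⟨hj1, hj2⟩ := hj
          have hwa : wrd (ins σ p) (a+1) = wrd σ a + 1 := by
            rw [wrd_ins_gt σ p (by omega) (by omega)]
            simp
          rw [hwa]
          by_cases hjP : j ≤ P
          · rw [wrd_ins_le σ p hj1 hjP]
            have := hca j ⟨hj1, by omega⟩
            omega
          · by_cases hjQ : j = P + 1
            · rw [hjQ, wrd_ins_eq σ p]
              have := wrd_pos σ ha1 ha2
              omega
            · rw [wrd_ins_gt σ p (by omega) (by omega)]
              have := hca (j-1) ⟨by omega, by omega⟩
              omega
      · have hP0 : P = 0 := by by_contra h; simp [h] at hr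
        have hi1 : i = 1 := by simpa [hP0] using hr
        subst hi1
        exact ⟨⟨le_refl 1, by omega⟩, by intro j hj; simp at hj; omega⟩
  have hdisj : Disjoint
      (((Icc 1 (n+1)).filter fun i => ∀ j ∈ Ico 1 i, wrd σ j < wrd σ i).image (shiftF P))
      ((if P = 0 then {1} else ∅ : Finset ℕ)) := by
    by_cases hP0 : P = 0
    · rw [if_pos hP0, Finset.disjoint_singleton_right]
      simp only [mem_image, mem_filter, mem_Icc]
      rintro ⟨a, ⟨⟨ha1, _⟩, _⟩, hfa⟩
      simp only [shiftF, if_neg (show ¬(a ≤ P) by omega)] at hfa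
      omega
    · simp [hP0]
  rw [permLmax, permLmax, key, card_union_of_disjoint hdisj,
    card_image_of_injective _ (shiftF_injective P)]
  congr 1
  split_ifs <;> simp

lemma permRmax_ins (σ : Equiv.Perm (Fin (n+1))) (p : Fin (n+2)) :
    permRmax (ins σ p) = permRmax σ + (if (p:ℕ) = n + 1 then 1 else 0) := by
  have hP : (p:ℕ) ≤ n + 1 := by have := p.isLt; omega
  set P := (p:ℕ) with hPdef
  have key : ((Icc 1 (n+2)).filter fun i => ∀ j ∈ Icc (i+1) (n+2), wrd (ins σ p) j < wrd (ins σ p) i)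
      = (((Icc 1 (n+1)).filter fun i => ∀ j ∈ Icc (i+1) (n+1), wrd σ j < wrd σ i).image (shiftF P))
        ∪ (if P = n + 1 then {n+2} else ∅) := by
    ext i
    simp only [mem_union, mem_image, mem_filter, mem_Icc]
    constructor
    · rintro ⟨⟨hi1, hi2⟩, hc⟩
      by_cases hiP : i = P + 1
      · right
        have hPn : P = n + 1 := by
          by_contra hne
          have := hc (n+2) ⟨by omega, le_refl _⟩
          rw [wrd_ins_gt σ p (by omega) (le_refl _), hiP, wrd_ins_eq σ p] at this
          omega
        simp [hPn, hiP]
      · by_cases hle : i ≤ P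
        · left
          refine ⟨i, ⟨⟨hi1, by omega⟩, ?_⟩, by simp [shiftF, hle]⟩
          intro j hj
          obtain ⟨hj1, hj2⟩ := hj
          have hwi : wrd (ins σ p) i = wrd σ i + 1 := wrd_ins_le σ p hi1 hle
          by_cases hjP : j ≤ P
          · have := hc j ⟨hj1, by omega⟩
            rw [wrd_ins_le σ p (by omega) hjP, hwi] at this
            omega
          · by_cases hjQ : j = P + 1
            · have := hc (P+2) ⟨by omega, by omega⟩
              rw [wrd_ins_gt σ p (by omega) (by omega), hwi] at this
              rw [show P + 2 - 1 = P + 1 by omega] at this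
              rw [hjQ]
              omega
            · have := hc (j+1) ⟨by omega, by omega⟩
              rw [wrd_ins_gt σ p (by omega) (by omega), hwi] at this
              simp only [Nat.add_sub_cancel] at this
              omega
        · left
          refine ⟨i - 1, ⟨⟨by omega, by omega⟩, ?_⟩,
            by simp only [shiftF, if_neg (show ¬(i - 1 ≤ P) by omega)]; omega⟩
          intro j hj
          obtain ⟨hj1, hj2⟩ := hj
          have hwi : wrd (ins σ p) i = wrd σ (i-1) + 1 := wrd_ins_gt σ p (by omega) hi2
          have := hc (j+1) ⟨by omega, by omega⟩
          rw [wrd_ins_gt σ p (by omega) (by omega), hwi] at this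
          simp only [Nat.add_sub_cancel] at this
          omega
    · rintro (⟨a, ⟨⟨ha1, ha2⟩, hca⟩, rfl⟩ | hr)
      · by_cases hle : a ≤ P
        · rw [show shiftF P a = a from by simp [shiftF, hle]]
          refine ⟨⟨ha1, by omega⟩, ?_⟩
          intro j hj
          obtain ⟨hj1, hj2⟩ := hj
          rw [wrd_ins_le σ p ha1 hle]
          by_cases hjP : j ≤ P
          · rw [wrd_ins_le σ p (by omega) hjP]
            have := hca j ⟨hj1, by omega⟩
            omega
          · by_cases hjQ : j = P + 1
            · rw [hjQ, wrd_ins_eq σ p]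
              have := wrd_pos σ ha1 ha2
              omega
            · rw [wrd_ins_gt σ p (by omega) (by omega)]
              have := hca (j-1) ⟨by omega, by omega⟩
              omega
        · rw [show shiftF P a = a + 1 from by simp [shiftF, hle]]
          refine ⟨⟨by omega, by omega⟩, ?_⟩
          intro j hj
          obtain ⟨hj1, hj2⟩ := hj
          have hwa : wrd (ins σ p) (a+1) = wrd σ a + 1 := by
            rw [wrd_ins_gt σ p (by omega) (by omega)]
            simp
          rw [hwa, wrd_ins_gt σ p (by omega) (by omega)]
          have := hca (j-1) ⟨by omega, by omega⟩
          omega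
      · have hPn : P = n + 1 := by by_contra h; simp [h] at hr
        have hi : i = n + 2 := by simpa [hPn] using hr
        subst hi
        refine ⟨⟨by omega, le_refl _⟩, ?_⟩
        intro j hj
        omega
  have hdisj : Disjoint
      (((Icc 1 (n+1)).filter fun i => ∀ j ∈ Icc (i+1) (n+1), wrd σ j < wrd σ i).image (shiftF P))
      ((if P = n + 1 then {n+2} else ∅ : Finset ℕ)) := by
    by_cases hPn : P = n + 1
    · rw [if_pos hPn, Finset.disjoint_singleton_right]
      simp only [mem_image, mem_filter, mem_Icc]
      rintro ⟨a, ⟨⟨ha1, ha2⟩, _⟩, hfa⟩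
      simp only [shiftF, if_pos (show a ≤ P by omega)] at hfa
      omega
    · simp [hPn]
  rw [permRmax, permRmax, key, card_union_of_disjoint hdisj,
    card_image_of_injective _ (shiftF_injective P)]
  congr 1
  split_ifs <;> simp

lemma permDes_ins (σ : Equiv.Perm (Fin (n+1))) (p : Fin (n+2)) :
    permDes (ins σ p) =
      (((Icc 1 n).filter fun i => wrd σ (i+1) < wrd σ i).erase (p:ℕ)).card
        + (if (p:ℕ) = 0 then 0 else 1) := by
  have hP : (p:ℕ) ≤ n + 1 := by have := p.isLt; omega
  set P := (p:ℕ) with hPdef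
  have key : ((Icc 1 (n+1)).filter fun i => wrd (ins σ p) (i+1) < wrd (ins σ p) i)
      = ((((Icc 1 n).filter fun i => wrd σ (i+1) < wrd σ i).erase P).image (shiftF P))
        ∪ (if P = 0 then ∅ else {P}) := by
    ext i
    simp only [mem_union, mem_image, mem_filter, mem_Icc, mem_erase]
    constructor
    · rintro ⟨⟨hi1, hi2⟩, hc⟩
      by_cases hiP : i = P
      · right
        rw [if_neg (by omega)]
        simp [hiP]
      · by_cases hiQ : i = P + 1
        · exfalso
          rw [hiQ, wrd_ins_eq σ p] at hc
          have : wrd (ins σ p) (P+1+1) = wrd σ (P+1) + 1 := by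
            rw [wrd_ins_gt σ p (by omega) (by omega)]
            simp
          rw [this] at hc
          omega
        · by_cases hle : i ≤ P
          · left
            refine ⟨i, ⟨by omega, ⟨by omega, by omega⟩, ?_⟩, by simp [shiftF, hle]⟩
            rw [wrd_ins_le σ p hi1 hle, wrd_ins_le σ p (by omega) (by omega)] at hc
            omega
          · left
            refine ⟨i - 1, ⟨by omega, ⟨by omega, by omega⟩, ?_⟩,
              by simp only [shiftF, if_neg (show ¬(i - 1 ≤ P) by omega)]; omega⟩
            rw [wrd_ins_gt σ p (by omega) (by omega), wrd_ins_gt σ p (by omega) (by omega)] at hc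
            simp only [Nat.add_sub_cancel] at hc
            rw [show i - 1 + 1 = i by omega]
            omega
    · rintro (⟨a, ⟨haP, ⟨ha1, ha2⟩, hd⟩, rfl⟩ | hr)
      · by_cases hle : a ≤ P
        · rw [show shiftF P a = a from by simp [shiftF, hle]]
          refine ⟨⟨ha1, by omega⟩, ?_⟩
          rw [wrd_ins_le σ p ha1 (by omega), wrd_ins_le σ p (by omega) (by omega)]
          omega
        · rw [show shiftF P a = a + 1 from by simp [shiftF, hle]]
          refine ⟨⟨by omega, by omega⟩, ?_⟩
          have h1 : wrd (ins σ p) (a+1) = wrd σ a + 1 := by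
            rw [wrd_ins_gt σ p (by omega) (by omega)]; simp
          have h2 : wrd (ins σ p) (a+1+1) = wrd σ (a+1) + 1 := by
            rw [wrd_ins_gt σ p (by omega) (by omega)]; simp
          rw [h1, h2]
          omega
      · have hP0 : ¬ P = 0 := by by_contra h; simp [h] at hr
        have hi : i = P := by
          rw [if_neg hP0] at hr
          simpa using hr
        subst hi
        refine ⟨⟨by omega, by omega⟩, ?_⟩
        rw [wrd_ins_eq σ p, wrd_ins_le σ p (by omega) (le_refl _)]
        have hpos : 1 ≤ wrd σ (p:ℕ) :=
          wrd_pos σ (by rw [← hPdef]; omega) (by rw [← hPdef]; omega)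
        omega
  have hdisj : Disjoint
      ((((Icc 1 n).filter fun i => wrd σ (i+1) < wrd σ i).erase P).image (shiftF P))
      ((if P = 0 then ∅ else {P}) : Finset ℕ) := by
    by_cases hP0 : P = 0
    · simp [hP0]
    · rw [if_neg hP0, Finset.disjoint_singleton_right]
      simp only [mem_image, mem_erase, mem_filter, mem_Icc]
      rintro ⟨a, ⟨haP, _⟩, hfa⟩
      simp only [shiftF] at hfa
      split_ifs at hfa <;> omega
  have hred : (n + 1 + 1 : ℕ) - 1 = n + 1 := by omega
  rw [permDes]
  simp only [hred]
  rw [key, card_union_of_disjoint hdisj, card_image_of_injective _ (shiftF_injective P)]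
  congr 1
  split_ifs <;> simp

def outs (τ : Equiv.Perm (Fin (n+2))) : Equiv.Perm (Fin (n+1)) :=
  Equiv.removeNone (((finSuccEquiv' (τ⁻¹ 0)).symm.trans τ).trans (finSuccEquiv (n+1)))

lemma outs_spec (τ : Equiv.Perm (Fin (n+2))) (j : Fin (n+1)) :
    (outs τ j).succ = τ ((τ⁻¹ 0).succAbove j) := by
  set e := ((finSuccEquiv' (τ⁻¹ 0)).symm.trans τ).trans (finSuccEquiv (n+1)) with he
  have hx : τ ((τ⁻¹ 0).succAbove j) ≠ 0 := by
    intro h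
    have := (Equiv.apply_eq_iff_eq_symm_apply τ).mp h
    exact Fin.succAbove_ne (τ⁻¹ 0) j (by simpa using this)
  have hes : e (some j) = finSuccEquiv (n+1) (τ ((τ⁻¹ 0).succAbove j)) := by
    simp [he]
  have hgen : ∀ (x : Fin (n+2)) (hx0 : x ≠ 0), finSuccEquiv (n+1) x = some (x.pred hx0) := by
    intro x hx0
    obtain ⟨y, rfl⟩ := Fin.exists_succ_eq.mpr hx0
    simp
  have hfin : finSuccEquiv (n+1) (τ ((τ⁻¹ 0).succAbove j))
      = some ((τ ((τ⁻¹ 0).succAbove j)).pred hx) := hgen _ hx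
  have h1 : some (outs τ j) = e (some j) :=
    Equiv.removeNone_some e ⟨_, by rw [hes, hfin]⟩
  rw [hes, hfin] at h1
  have h2 : outs τ j = (τ ((τ⁻¹ 0).succAbove j)).pred hx := by
    exact Option.some_injective _ h1
  rw [h2, Fin.succ_pred]

lemma ins_inv_zero (σ : Equiv.Perm (Fin (n+1))) (p : Fin (n+2)) : (ins σ p)⁻¹ 0 = p := by
  have : ins σ p p = 0 := ins_self σ p
  exact (Equiv.symm_apply_eq _).mpr this.symm

lemma ins_outs (τ : Equiv.Perm (Fin (n+2))) : ins (outs τ) (τ⁻¹ 0) = τ := by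
  apply Equiv.ext
  intro i
  rcases eq_or_ne i (τ⁻¹ 0) with h | h
  · rw [h, ins_self]
    exact (Equiv.apply_symm_apply τ 0).symm
  · obtain ⟨j, rfl⟩ := Fin.exists_succAbove_eq h
    rw [ins_succAbove, outs_spec]

lemma outs_ins (σ : Equiv.Perm (Fin (n+1))) (p : Fin (n+2)) : outs (ins σ p) = σ := by
  apply Equiv.ext
  intro j
  apply Fin.succ_injective
  rw [outs_spec, ins_inv_zero, ins_succAbove]

def insEquiv : Equiv.Perm (Fin (n+1)) × Fin (n+2) ≃ Equiv.Perm (Fin (n+2)) where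
  toFun x := ins x.1 x.2
  invFun τ := (outs τ, τ⁻¹ 0)
  left_inv x := by
    apply Prod.ext
    · exact outs_ins x.1 x.2
    · exact ins_inv_zero x.1 x.2
  right_inv τ := ins_outs τ

lemma permLmax_pos {m : ℕ} (σ : Equiv.Perm (Fin (m+1))) : 1 ≤ permLmax σ := by
  rw [permLmax]
  apply Finset.card_pos.mpr
  refine ⟨1, ?_⟩
  simp only [mem_filter, mem_Icc]
  refine ⟨⟨le_refl 1, by omega⟩, ?_⟩
  intro j hj
  rw [mem_Ico] at hj
  omega

lemma permRmax_pos {m : ℕ} (σ : Equiv.Perm (Fin (m+1))) : 1 ≤ permRmax σ := by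
  rw [permRmax]
  apply Finset.card_pos.mpr
  refine ⟨m+1, ?_⟩
  simp only [mem_filter, mem_Icc]
  refine ⟨⟨by omega, le_refl _⟩, ?_⟩
  intro j hj
  omega

lemma apolyInnerSum (R : Type*) [CommRing R] (α : R) (σ : Equiv.Perm (Fin (n+1))) (k : ℕ) :
    ∑ p : Fin (n+2), (if permDes (ins σ p) = k
        then α ^ (permLmax (ins σ p) + permRmax (ins σ p) - 2) else 0)
      = (if permDes σ = k then ((permDes σ : R) + α) * α ^ (permLmax σ + permRmax σ - 2) else 0)
        + (if permDes σ + 1 = k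
            then (((n - permDes σ : ℕ) : R) + α) * α ^ (permLmax σ + permRmax σ - 2) else 0) := by
  classical
  set D := (Icc 1 n).filter (fun i => wrd σ (i+1) < wrd σ i) with hDdef
  have hDes : permDes σ = D.card := by rw [permDes, hDdef]; norm_num
  have hDsub : ∀ a ∈ D, 1 ≤ a ∧ a ≤ n := by
    intro a ha
    rw [hDdef, mem_filter, mem_Icc] at ha
    exact ha.1
  have h0D : (0:ℕ) ∉ D := fun h => by have := hDsub 0 h; omega
  have hnD : (n+1) ∉ D := fun h => by have := hDsub (n+1) h; omega
  set L := permLmax σ with hLdef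
  set Rr := permRmax σ with hRdef
  have hL := permLmax_pos σ
  have hR := permRmax_pos σ
  set w : R := α ^ (L + Rr - 2) with hw
  set g : ℕ → R := fun P =>
    if (D.erase P).card + (if P = 0 then 0 else 1) = k
    then α ^ ((L + (if P = 0 then 1 else 0)) + (Rr + (if P = n+1 then 1 else 0)) - 2) else 0
    with hg
  have hstep : ∀ p : Fin (n+2),
      (if permDes (ins σ p) = k then α ^ (permLmax (ins σ p) + permRmax (ins σ p) - 2) else 0)
        = g (p:ℕ) := by
    intro p
    rw [permDes_ins σ p, permLmax_ins σ p, permRmax_ins σ p]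
  rw [Finset.sum_congr rfl (fun p _ => hstep p), Fin.sum_univ_eq_sum_range g (n+2)]
  have hg0 : g 0 = (if D.card = k then w * α else 0) := by
    rw [hg]
    simp only [eq_self_iff_true, if_true, if_neg (show ¬(0:ℕ) = n + 1 by omega),
      Finset.erase_eq_of_notMem h0D, add_zero]
    rw [show L + 1 + Rr - 2 = (L + Rr - 2) + 1 by omega, pow_succ, ← hw]
  have hgn : g (n+1) = (if D.card + 1 = k then w * α else 0) := by
    rw [hg]
    simp only [eq_self_iff_true, if_true, if_neg (show ¬(n+1:ℕ) = 0 by omega),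
      Finset.erase_eq_of_notMem hnD, add_zero]
    rw [show L + (Rr + 1) - 2 = (L + Rr - 2) + 1 by omega, pow_succ, ← hw]
  have hmid : ∀ i ∈ range n, g (i+1)
      = (if i+1 ∈ D then (if D.card = k then w else 0) else (if D.card + 1 = k then w else 0)) := by
    intro i hi
    rw [mem_range] at hi
    rw [hg]
    simp only [if_neg (show ¬(i+1:ℕ) = 0 by omega), if_neg (show ¬(i+1:ℕ) = n+1 by omega),
      add_zero]
    rw [← hw]
    by_cases hiD : i + 1 ∈ D
    · rw [if_pos hiD, Finset.card_erase_of_mem hiD]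
      have hc : 1 ≤ D.card := Finset.card_pos.mpr ⟨_, hiD⟩
      rw [show D.card - 1 + 1 = D.card by omega]
    · rw [if_neg hiD, Finset.erase_eq_of_notMem hiD]
  rw [Finset.sum_range_succ, Finset.sum_range_succ']
  rw [Finset.sum_congr rfl hmid, hg0, hgn]
  have hsplit : ∑ i ∈ range n,
      (if i+1 ∈ D then (if D.card = k then w else 0) else (if D.card + 1 = k then w else 0))
      = (((range n).filter (fun i => i+1 ∈ D)).card : R) * (if D.card = k then w else 0)
        + (((range n).filter (fun i => ¬ (i+1 ∈ D))).card : R) * (if D.card + 1 = k then w else 0) := by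
    rw [Finset.sum_ite, Finset.sum_const, Finset.sum_const, nsmul_eq_mul, nsmul_eq_mul]
  have hcard1 : ((range n).filter (fun i => i+1 ∈ D)).card = D.card := by
    apply Finset.card_bij (fun i _ => i + 1)
    · intro a ha
      simp only [mem_filter] at ha
      exact ha.2
    · intro a _ b _ hab
      omega
    · intro b hb
      have hbb := hDsub b hb
      refine ⟨b - 1, ?_, by omega⟩
      simp only [mem_filter, mem_range]
      refine ⟨by omega, ?_⟩
      rw [show b - 1 + 1 = b by omega]
      exact hb
  have hcard2 : ((range n).filter (fun i => ¬ (i+1 ∈ D))).card = n - D.card := by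
    have h := Finset.card_filter_add_card_filter_not
      (s := range n) (p := fun i => i+1 ∈ D)
    rw [Finset.card_range, hcard1] at h
    omega
  rw [hsplit, hcard1, hcard2, hDes]
  by_cases h1 : D.card = k <;> by_cases h2 : D.card + 1 = k
  · omega
  · simp only [if_pos h1, if_neg h2, mul_zero, add_zero, zero_add]
    ring
  · simp only [if_neg h1, if_pos h2, mul_zero, add_zero, zero_add]
    ring
  · simp only [if_neg h1, if_neg h2, mul_zero, add_zero, zero_add]

/-- The recurrence A_{n+1,k} = (k+α)A_{n,k} + (n+1−k+α)A_{n,k−1},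
with A_{0,0} = 1 and A_{0,−1} = 0. -/
theorem Apoly_recurrence (R : Type*) [CommRing R] (α : R) :
    Apoly R α 0 0 = 1 ∧
    ∀ n k : ℕ, k ≤ n →
      Apoly R α (n + 1) k =
        ((k : R) + α) * Apoly R α n k +
          (((n + 1 - k : ℕ) : R) + α) * (if k = 0 then 0 else Apoly R α n (k - 1)) := by
  constructor
  · rw [Apoly]
    have h1 : ∀ σ : Equiv.Perm (Fin (0+1)), permDes σ = 0 := by
      intro σ
      rw [permDes]
      have he : (Icc 1 (0+1-1) : Finset ℕ) = ∅ := by decide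
      rw [he, Finset.filter_empty, Finset.card_empty]
    have h2 : ∀ σ : Equiv.Perm (Fin (0+1)), permLmax σ + permRmax σ - 2 = 0 := by
      intro σ
      have hl : permLmax σ = 1 := by
        rw [permLmax]
        have he : (Icc 1 (0+1)).filter (fun i => ∀ j ∈ Ico 1 i, wrd σ j < wrd σ i)
            = {1} := by
          ext i
          simp only [mem_filter, mem_Icc, mem_singleton]
          constructor
          · rintro ⟨⟨ha, hb⟩, _⟩
            omega
          · rintro rfl
            refine ⟨⟨le_refl 1, le_refl 1⟩, ?_⟩
            intro j hj
            rw [mem_Ico] at hj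
            omega
        rw [he, Finset.card_singleton]
      have hr : permRmax σ = 1 := by
        rw [permRmax]
        have he : (Icc 1 (0+1)).filter (fun i => ∀ j ∈ Icc (i+1) (0+1), wrd σ j < wrd σ i)
            = {1} := by
          ext i
          simp only [mem_filter, mem_Icc, mem_singleton]
          constructor
          · rintro ⟨⟨ha, hb⟩, _⟩
            omega
          · rintro rfl
            refine ⟨⟨le_refl 1, le_refl 1⟩, ?_⟩
            intro j hj
            omega
        rw [he, Finset.card_singleton]
      omega
    rw [Finset.filter_true_of_mem (fun σ _ => h1 σ)]
    rw [Finset.sum_congr rfl (fun σ _ => by rw [h2 σ, pow_zero])]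
    rw [Finset.sum_const, Finset.card_univ]
    simp [Fintype.card_perm]
  · intro n k hk
    have hA : Apoly R α (n + 1) k
        = ∑ σ ∈ Finset.univ.filter (fun σ : Equiv.Perm (Fin (n + 2)) => permDes σ = k),
            α ^ (permLmax σ + permRmax σ - 2) := rfl
    rw [hA, Finset.sum_filter]
    rw [← Equiv.sum_comp (insEquiv (n := n))
      (fun τ => if permDes τ = k then α ^ (permLmax τ + permRmax τ - 2) else 0)]
    rw [Fintype.sum_prod_type]
    have hin : ∀ σ : Equiv.Perm (Fin (n+1)),
        (∑ p : Fin (n+2),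
          (fun τ => if permDes τ = k then α ^ (permLmax τ + permRmax τ - 2) else 0)
            (insEquiv (σ, p)))
        = (if permDes σ = k
            then ((permDes σ : R) + α) * α ^ (permLmax σ + permRmax σ - 2) else 0)
          + (if permDes σ + 1 = k
            then (((n - permDes σ : ℕ) : R) + α) * α ^ (permLmax σ + permRmax σ - 2) else 0) := by
      intro σ
      exact apolyInnerSum R α σ k
    rw [Finset.sum_congr rfl (fun σ _ => hin σ), Finset.sum_add_distrib]
    have e1 : ∑ σ : Equiv.Perm (Fin (n+1)),
        (if permDes σ = k
          then ((permDes σ : R) + α) * α ^ (permLmax σ + permRmax σ - 2) else 0)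
        = ((k:R) + α) * Apoly R α n k := by
      rw [Apoly, Finset.mul_sum, Finset.sum_filter]
      apply Finset.sum_congr rfl
      intro σ _
      by_cases h : permDes σ = k
      · rw [if_pos h, if_pos h, h]
      · rw [if_neg h, if_neg h]
    have e2 : ∑ σ : Equiv.Perm (Fin (n+1)),
        (if permDes σ + 1 = k
          then (((n - permDes σ : ℕ) : R) + α) * α ^ (permLmax σ + permRmax σ - 2) else 0)
        = (((n + 1 - k : ℕ) : R) + α) * (if k = 0 then 0 else Apoly R α n (k - 1)) := by
      by_cases hk0 : k = 0
      · subst hk0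
        rw [if_pos rfl, mul_zero]
        apply Finset.sum_eq_zero
        intro σ _
        rw [if_neg (by omega)]
      · rw [if_neg hk0, Apoly, Finset.mul_sum, Finset.sum_filter]
        apply Finset.sum_congr rfl
        intro σ _
        by_cases h : permDes σ = k - 1
        · rw [if_pos (show permDes σ + 1 = k by omega), if_pos h]
          rw [show n - permDes σ = n + 1 - k by omega]
        · rw [if_neg (by omega), if_neg h]
    rw [e1, e2]
end
end

section
/- Let E_n(x) = Σ_{σ ∈ A_n^1} x^{des(σ)} be the descent polynomial of André permutations of the first kind of [n]. Then for n ≥ 0, E_{n+2}(x) = E_{n+1}(x) + x · Σ_{j=1}^{n} C(n,j) E_j(x) E_{n+1−j}(x). -/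
open Finset
open scoped Classical
noncomputable section

/-- André words of the first kind (recursive definition). -/
inductive IsAndre1 : List ℕ → Prop
  | nil : IsAndre1 []
  | node (v v' : List ℕ) (m : ℕ)
      (hmin : ∀ a ∈ v ++ v', m < a)
      (hv : IsAndre1 v) (hv' : IsAndre1 v')
      (hmax : v = [] ∨ ∃ M ∈ v', ∀ a ∈ v, a < M) :
      IsAndre1 (v ++ m :: v')

def IsAndrePerm1 {n : ℕ} (σ : Equiv.Perm (Fin n)) : Prop :=
  IsAndre1 (List.ofFn fun i : Fin n => ((σ i : Fin n) : ℕ) + 1)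

/-- E_m(x): descent polynomial of André permutations of the first kind of [m]. -/
def Epoly (R : Type*) [CommRing R] (x : R) (m : ℕ) : R :=
  ∑ σ ∈ Finset.univ.filter (fun σ : Equiv.Perm (Fin m) => IsAndrePerm1 σ),
    x ^ permDes σ

namespace AndreAux

def ldes : List ℕ → ℕ
  | a :: b :: t => ldes (b :: t) + (if b < a then 1 else 0)
  | _ => 0

@[simp] lemma ldes_nil : ldes [] = 0 := rfl
@[simp] lemma ldes_single (a : ℕ) : ldes [a] = 0 := rfl
lemma ldes_cons_cons (a b : ℕ) (t : List ℕ) :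
    ldes (a :: b :: t) = ldes (b :: t) + (if b < a then 1 else 0) := rfl

/-- last element with default 0 -/
def lastd (l : List ℕ) : ℕ := l.getLast?.getD 0

@[simp] lemma lastd_single (a : ℕ) : lastd [a] = a := rfl
lemma lastd_cons_cons (a b : ℕ) (t : List ℕ) : lastd (a :: b :: t) = lastd (b :: t) := by
  simp [lastd]

lemma lastd_mem : ∀ (l : List ℕ), l ≠ [] → lastd l ∈ l
  | [a], _ => by simp
  | a :: b :: t, _ => by
      rw [lastd_cons_cons]
      exact List.mem_cons_of_mem _ (lastd_mem (b :: t) (by simp))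

lemma ldes_append : ∀ (v w : List ℕ), v ≠ [] → w ≠ [] →
    ldes (v ++ w) = ldes v + ldes w + (if w.headI < lastd v then 1 else 0)
  | [a], c :: t, _, _ => by
      simp only [List.singleton_append, ldes_cons_cons, ldes_single, List.headI, lastd_single]
      by_cases hca : c < a <;> simp [hca]
  | a :: b :: t, c :: u, _, _ => by
      have IH := ldes_append (b :: t) (c :: u) (by simp) (by simp)
      simp only [List.cons_append] at *
      rw [ldes_cons_cons, IH, ldes_cons_cons, lastd_cons_cons]
      ring

lemma ldes_one_cons (w : List ℕ) (hw : ∀ a ∈ w, 1 < a) : ldes (1 :: w) = ldes w := by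
  cases w with
  | nil => rfl
  | cons c t =>
      rw [ldes_cons_cons]
      have : ¬ c < 1 := by have := hw c (by simp); omega
      simp [this]

lemma ldes_decomp (v w : List ℕ) (hv : v ≠ []) (hw : w ≠ [])
    (h1 : ∀ a ∈ v, 1 < a) (h2 : ∀ a ∈ w, 1 < a) :
    ldes (v ++ 1 :: w) = ldes v + ldes w + 1 := by
  rw [ldes_append v (1 :: w) hv (by simp)]
  rw [ldes_one_cons w h2]
  have h3 : (1 : ℕ) < lastd v := h1 _ (lastd_mem v hv)
  simp [List.headI, h3]

lemma ldes_map : ∀ (l : List ℕ) (f : ℕ → ℕ),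
    (∀ a ∈ l, ∀ b ∈ l, (a < b ↔ f a < f b)) → ldes (l.map f) = ldes l
  | [], _, _ => rfl
  | [a], _, _ => rfl
  | a :: b :: t, f, h => by
      have IH := ldes_map (b :: t) f
        (fun x hx y hy => h x (List.mem_cons_of_mem _ hx) y (List.mem_cons_of_mem _ hy))
      simp only [List.map_cons] at IH ⊢
      rw [ldes_cons_cons, ldes_cons_cons, IH]
      congr 1
      simp only [← h b (by simp) a (by simp)]

lemma ldes_eq_card : ∀ (l : List ℕ),
    ((Finset.range (l.length - 1)).filter fun i => l.getD (i+1) 0 < l.getD i 0).card = ldes l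
  | [] => by simp
  | [a] => by simp
  | a :: b :: t => by
      have IH := ldes_eq_card (b :: t)
      rw [Finset.card_filter] at IH
      simp only [List.length_cons, Nat.add_sub_cancel] at IH
      rw [ldes_cons_cons, ← IH, Finset.card_filter]
      simp only [List.length_cons, Nat.add_sub_cancel]
      rw [Finset.sum_range_succ']
      simp only [List.getD_cons_succ, List.getD_cons_zero]


lemma andre_map {l : List ℕ} (h : IsAndre1 l) :
    ∀ f : ℕ → ℕ, (∀ a ∈ l, ∀ b ∈ l, (a < b ↔ f a < f b)) → IsAndre1 (l.map f) := by
  induction h with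
  | nil => intro f _; exact IsAndre1.nil
  | node v v' m hmin hv hv' hmax ihv ihv' =>
      intro f hf
      have hmv : ∀ a ∈ v, a ∈ v ++ m :: v' := fun a ha => List.mem_append_left _ ha
      have hmv' : ∀ a ∈ v', a ∈ v ++ m :: v' := fun a ha =>
        List.mem_append_right _ (List.mem_cons_of_mem _ ha)
      have hmm : m ∈ v ++ m :: v' := List.mem_append_right _ (List.mem_cons_self)
      rw [List.map_append, List.map_cons]
      refine IsAndre1.node _ _ _ ?_ (ihv f (fun a ha b hb => hf a (hmv a ha) b (hmv b hb)))
        (ihv' f (fun a ha b hb => hf a (hmv' a ha) b (hmv' b hb))) ?_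
      · intro a ha
        rw [← List.map_append] at ha
        obtain ⟨b, hb, rfl⟩ := List.mem_map.mp ha
        have hbm : b ∈ v ++ m :: v' := by
          rcases List.mem_append.mp hb with h' | h'
          · exact hmv b h'
          · exact hmv' b h'
        exact (hf m hmm b hbm).mp (hmin b hb)
      · rcases hmax with h' | ⟨M, hM, hlt⟩
        · left; simp [h']
        · right
          exact ⟨f M, List.mem_map_of_mem (f := f) hM, by
            intro a ha
            obtain ⟨b, hb, rfl⟩ := List.mem_map.mp ha
            exact (hf b (hmv b hb) M (hmv' M hM)).mp (hlt b hb)⟩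

lemma andre_unmap {L : List ℕ} (h : IsAndre1 L) :
    ∀ (l : List ℕ) (f : ℕ → ℕ), (∀ a ∈ l, ∀ b ∈ l, (a < b ↔ f a < f b)) →
      l.map f = L → IsAndre1 l := by
  induction h with
  | nil =>
      intro l f _ he
      rw [List.map_eq_nil_iff] at he; subst he; exact IsAndre1.nil
  | node v v' m hmin hv hv' hmax ihv ihv' =>
      intro l f hf he
      rw [List.map_eq_append_iff] at he
      obtain ⟨l₁, l₃, rfl, h1, h3⟩ := he
      rw [List.map_eq_cons_iff] at h3
      obtain ⟨a, l₂, rfl, ha, h2⟩ := h3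
      have hm1 : ∀ b ∈ l₁, b ∈ l₁ ++ a :: l₂ := fun b hb => List.mem_append_left _ hb
      have hm2 : ∀ b ∈ l₂, b ∈ l₁ ++ a :: l₂ := fun b hb =>
        List.mem_append_right _ (List.mem_cons_of_mem _ hb)
      have hma : a ∈ l₁ ++ a :: l₂ := List.mem_append_right _ (List.mem_cons_self)
      refine IsAndre1.node _ _ _ ?_
        (ihv l₁ f (fun x hx y hy => hf x (hm1 x hx) y (hm1 y hy)) h1)
        (ihv' l₂ f (fun x hx y hy => hf x (hm2 x hx) y (hm2 y hy)) h2) ?_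
      · intro b hb
        have hbm : b ∈ l₁ ++ a :: l₂ := by
          rcases List.mem_append.mp hb with h' | h'
          · exact hm1 b h'
          · exact hm2 b h'
        have : f b ∈ v ++ v' := by
          rcases List.mem_append.mp hb with h' | h'
          · exact List.mem_append_left _ (h1 ▸ List.mem_map_of_mem (f := f) h')
          · exact List.mem_append_right _ (h2 ▸ List.mem_map_of_mem (f := f) h')
        have := hmin (f b) this
        rw [← ha] at this
        exact (hf a hma b hbm).mpr this
      · rcases hmax with h' | ⟨M, hM, hlt⟩
        · left
          rw [← h1] at h'
          exact List.map_eq_nil_iff.mp h'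
        · right
          rw [← h2] at hM
          obtain ⟨c, hc, rfl⟩ := List.mem_map.mp hM
          refine ⟨c, hc, fun b hb => ?_⟩
          have : f b ∈ v := h1 ▸ List.mem_map_of_mem (f := f) hb
          exact (hf b (hm1 b hb) c (hm2 c hc)).mpr (hlt (f b) this)

/-- uniqueness of splitting at an element not occurring elsewhere -/
lemma append_inj_of_not_mem {m : ℕ} :
    ∀ {v w v' w' : List ℕ}, v ++ m :: v' = w ++ m :: w' → m ∉ v → m ∉ w →
      v = w ∧ v' = w'
  | [], [], v', w', h, _, _ => by simpa using h
  | [], b :: w, v', w', h, _, hw => by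
      simp only [List.nil_append, List.cons_append, List.cons.injEq] at h
      exact absurd (h.1 ▸ List.mem_cons_self : m ∈ b :: w) hw
  | a :: v, [], v', w', h, hv, _ => by
      simp only [List.nil_append, List.cons_append, List.cons.injEq] at h
      exact absurd (h.1 ▸ List.mem_cons_self : m ∈ a :: v) hv
  | a :: v, b :: w, v', w', h, hv, hw => by
      simp only [List.cons_append, List.cons.injEq] at h
      obtain ⟨rfl, h2⟩ := h
      have := append_inj_of_not_mem h2 (fun hm => hv (List.mem_cons_of_mem _ hm))
        (fun hm => hw (List.mem_cons_of_mem _ hm))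
      exact ⟨by rw [this.1], this.2⟩

def tw (l : List ℕ) : List ℕ := l.takeWhile (fun a => a != 1)
def dw (l : List ℕ) : List ℕ := (l.dropWhile (fun a => a != 1)).tail

lemma dropWhile_one : ∀ (l : List ℕ), (1:ℕ) ∈ l →
    l.dropWhile (fun a => a != 1) = 1 :: dw l
  | a :: t, h => by
      by_cases h1 : a = 1
      · subst h1
        simp [List.dropWhile, dw]
      · have ht : (1:ℕ) ∈ t := by
          rcases List.mem_cons.mp h with h' | h'
          · exact absurd h'.symm h1
          · exact h'
        have hb : (a != 1) = true := by simpa using h1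
        simp only [dw, List.dropWhile, hb]
        exact dropWhile_one t ht

lemma split_at_one (l : List ℕ) (h : (1:ℕ) ∈ l) : l = tw l ++ 1 :: dw l := by
  conv_lhs => rw [← List.takeWhile_append_dropWhile (p := fun a => a != 1) (l := l)]
  rw [dropWhile_one l h]
  rfl

lemma one_not_mem_tw (l : List ℕ) : (1:ℕ) ∉ tw l := by
  intro h
  have := List.mem_takeWhile_imp h
  simp at this

lemma mem_tw {l : List ℕ} {a : ℕ} (h : a ∈ tw l) : a ∈ l :=
  (List.takeWhile_sublist _).mem h

lemma mem_dw {l : List ℕ} {a : ℕ} (h : a ∈ dw l) : a ∈ l :=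
  (List.dropWhile_sublist _).mem ((List.tail_sublist _).mem h)

lemma ne_one_of_mem_tw {l : List ℕ} {a : ℕ} (h : a ∈ tw l) : a ≠ 1 := by
  have := List.mem_takeWhile_imp h
  simpa using this


lemma split_facts {l : List ℕ} (hnd : l.Nodup) (h1 : (1:ℕ) ∈ l) :
    (tw l).Nodup ∧ (dw l).Nodup ∧ ((1:ℕ) ∉ dw l) ∧ (tw l).Disjoint (1 :: dw l) := by
  rw [split_at_one l h1] at hnd
  rw [List.nodup_append] at hnd
  obtain ⟨h₁, h₂, h₃⟩ := hnd
  rw [List.nodup_cons] at h₂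
  exact ⟨h₁, h₂.2, h₂.1, fun a ha hb => h₃ a ha a hb rfl⟩

lemma andre_char {N : ℕ} {l : List ℕ} (hnd : l.Nodup)
    (hmem : ∀ a ∈ l, 1 ≤ a ∧ a ≤ N + 2) (h1 : (1:ℕ) ∈ l) (hN : (N+2:ℕ) ∈ l) :
    IsAndre1 l ↔
      IsAndre1 (tw l) ∧ IsAndre1 (dw l) ∧ (tw l = [] ∨ (N+2:ℕ) ∈ dw l) := by
  obtain ⟨hndt, hndd, h1d, hdisj⟩ := split_facts hnd h1
  constructor
  · intro h
    rcases h with _ | ⟨v, v', m, hmin, hv, hv', hmax⟩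
    · simp at h1
    · -- here l is replaced by v ++ m :: v'
      have hm1 : m = 1 := by
        have hml : m ∈ v ++ m :: v' := List.mem_append_right _ (List.mem_cons_self)
        have h1le := (hmem m hml).1
        by_contra hne
        have h1mem : (1:ℕ) ∈ v ++ v' := by
          rcases List.mem_append.mp h1 with h' | h'
          · exact List.mem_append_left _ h'
          · rcases List.mem_cons.mp h' with h'' | h''
            · exact absurd h''.symm hne
            · exact List.mem_append_right _ h''
        have := hmin 1 h1mem
        omega
      subst hm1
      have h1v : (1:ℕ) ∉ v := fun hc => lt_irrefl 1 (hmin 1 (List.mem_append_left _ hc))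
      have heq : tw (v ++ 1 :: v') = v ∧ dw (v ++ 1 :: v') = v' :=
        append_inj_of_not_mem (split_at_one _ h1).symm (one_not_mem_tw _) h1v
      rw [heq.1, heq.2]
      refine ⟨hv, hv', ?_⟩
      rcases hmax with h' | ⟨M, hM, hlt⟩
      · exact Or.inl h'
      · right
        rcases List.mem_append.mp hN with h' | h'
        · exfalso
          have hlt1 := hlt _ h'
          have := (hmem M (List.mem_append_right _ (List.mem_cons_of_mem _ hM))).2
          omega
        · rcases List.mem_cons.mp h' with h'' | h''
          · exfalso; omega
          · exact h''
  · rintro ⟨ht, hd, hor⟩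
    have hmin : ∀ a ∈ tw l ++ dw l, 1 < a := by
      intro a ha
      rcases List.mem_append.mp ha with h' | h'
      · have := (hmem a (mem_tw h')).1
        have := ne_one_of_mem_tw h'
        omega
      · have := (hmem a (mem_dw h')).1
        have : a ≠ 1 := fun hc => h1d (hc ▸ h')
        have := (hmem a (mem_dw h')).1
        omega
    have hmax : tw l = [] ∨ ∃ M ∈ dw l, ∀ a ∈ tw l, a < M := by
      rcases hor with h' | h'
      · exact Or.inl h'
      · right
        refine ⟨N+2, h', fun a ha => ?_⟩
        have hle := (hmem a (mem_tw ha)).2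
        have hne : a ≠ N+2 := by
          intro hc
          exact (List.disjoint_left.mp hdisj ha) (hc ▸ List.mem_cons_of_mem _ h')
        omega
    rw [split_at_one l h1]
    exact IsAndre1.node _ _ _ hmin ht hd hmax


/-- The Finset of André arrangements of a finite set of naturals. -/
def A (s : Finset ℕ) : Finset (List ℕ) :=
  (s.sort (·≤·)).permutations.toFinset.filter (fun l => IsAndre1 l)

lemma mem_A {s : Finset ℕ} {l : List ℕ} :
    l ∈ A s ↔ l.Nodup ∧ l.toFinset = s ∧ IsAndre1 l := by
  rw [A, Finset.mem_filter, List.mem_toFinset, List.mem_permutations]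
  constructor
  · rintro ⟨hp, ha⟩
    refine ⟨hp.nodup_iff.mpr (Finset.sort_nodup _ _), ?_, ha⟩
    have : (↑l : Multiset ℕ) = ↑(s.sort (·≤·)) := Multiset.coe_eq_coe.mpr hp
    have h3 := congrArg Multiset.toFinset this
    rw [← Finset.sort_toFinset s (·≤·)]
    exact h3
  · rintro ⟨hnd, hfs, ha⟩
    refine ⟨?_, ha⟩
    rw [← Multiset.coe_eq_coe]
    have h1 : (↑l : Multiset ℕ) = s.val := by
      rw [← List.toFinset_eq hnd] at hfs
      exact congrArg Finset.val hfs
    have h2 : (↑(s.sort (·≤·)) : Multiset ℕ) = s.val := Finset.sort_eq s (·≤·)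
    rw [h1, h2]

lemma length_of_mem_A {s : Finset ℕ} {l : List ℕ} (h : l ∈ A s) : l.length = s.card := by
  obtain ⟨hnd, hfs, -⟩ := mem_A.mp h
  have := List.toFinset_card_of_nodup hnd
  rw [hfs] at this
  omega

lemma mem_of_mem_A {s : Finset ℕ} {l : List ℕ} (h : l ∈ A s) {a : ℕ} (ha : a ∈ l) : a ∈ s := by
  obtain ⟨-, hfs, -⟩ := mem_A.mp h
  rw [← hfs]
  exact List.mem_toFinset.mpr ha

variable {R : Type*} [CommRing R]

/-- Invariance of the André descent polynomial under order-isomorphic relabeling. -/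
lemma sum_A_eq (x : R) (s : Finset ℕ) :
    ∑ l ∈ A s, x ^ ldes l = ∑ l ∈ A (Finset.Icc 1 s.card), x ^ ldes l := by
  set k := s.card with hk
  set L := s.sort (·≤·) with hL
  have hlen : L.length = k := Finset.length_sort _
  set f : ℕ → ℕ := fun i => L.getD (i-1) 0 with hf
  set g : ℕ → ℕ := fun a => L.idxOf a + 1 with hg
  have hmemIcc : ∀ i, i ∈ Finset.Icc 1 k ↔ 1 ≤ i ∧ i ≤ k := fun i => Finset.mem_Icc
  have hfget : ∀ i (hi : 1 ≤ i ∧ i ≤ k), f i = L.get ⟨i-1, by omega⟩ := by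
    intro i hi
    simp only [hf]
    rw [List.getD_eq_getElem L 0 (by omega), List.get_eq_getElem]
  have hfs : ∀ i, 1 ≤ i ∧ i ≤ k → f i ∈ s := by
    intro i hi
    rw [hfget i hi]
    exact (Finset.mem_sort (·≤·)).mp (List.get_mem _ _)
  have hmono : ∀ i, 1 ≤ i ∧ i ≤ k → ∀ j, 1 ≤ j ∧ j ≤ k → (i < j ↔ f i < f j) := by
    intro i hi j hj
    rw [hfget i hi, hfget j hj]
    have hs : StrictMono L.get := (Finset.sortedLT_sort s).strictMono_get
    constructor
    · intro hij; exact hs (by simp [Fin.lt_def]; omega)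
    · intro hij
      have := hs.lt_iff_lt.mp hij
      simp [Fin.lt_def] at this
      omega
  have hgs : ∀ a ∈ s, 1 ≤ g a ∧ g a ≤ k := by
    intro a ha
    have : L.idxOf a < L.length := List.idxOf_lt_length_iff.mpr ((Finset.mem_sort (·≤·)).mpr ha)
    simp only [hg]; omega
  have hfg : ∀ a ∈ s, f (g a) = a := by
    intro a ha
    have hlt : L.idxOf a < L.length := List.idxOf_lt_length_iff.mpr ((Finset.mem_sort (·≤·)).mpr ha)
    simp only [hf, hg, Nat.add_sub_cancel]
    rw [List.getD_eq_getElem L 0 hlt]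
    exact List.getElem_idxOf hlt
  have hgf : ∀ i, 1 ≤ i ∧ i ≤ k → g (f i) = i := by
    intro i hi
    have h1 := hgs _ (hfs i hi)
    have h2 := hfg _ (hfs i hi)
    by_contra hne
    rcases Nat.lt_or_ge (g (f i)) i with h' | h'
    · have := (hmono _ h1 _ hi).mp h'
      rw [h2] at this; omega
    · have h'' : i < g (f i) := by omega
      have := (hmono _ hi _ h1).mp h''
      rw [h2] at this; omega
  have hgmono : ∀ a ∈ s, ∀ b ∈ s, (a < b ↔ g a < g b) := by
    intro a ha b hb
    rw [show (a < b ↔ f (g a) < f (g b)) from by rw [hfg a ha, hfg b hb]]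
    exact (hmono _ (hgs a ha) _ (hgs b hb)).symm
  refine Finset.sum_nbij' (fun v => v.map g) (fun w => w.map f) ?_ ?_ ?_ ?_ ?_
  · -- forward membership
    intro v hv
    obtain ⟨hnd, hfs', ha⟩ := mem_A.mp hv
    have hvmem : ∀ a ∈ v, a ∈ s := fun a hav => mem_of_mem_A hv hav
    rw [mem_A]
    refine ⟨List.Nodup.map_on ?_ hnd, ?_, ?_⟩
    · intro a hav b hbv hab
      have h1 := hfg a (hvmem a hav); have h2 := hfg b (hvmem b hbv)
      rw [← h1, ← h2, hab]
    · ext c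
      simp only [List.mem_toFinset, List.mem_map, Finset.mem_Icc]
      constructor
      · rintro ⟨a, hav, rfl⟩
        exact hgs a (hvmem a hav)
      · intro hc
        refine ⟨f c, ?_, hgf c hc⟩
        rw [← List.mem_toFinset, hfs']
        exact hfs c hc
    · exact andre_map ha g (fun a hav b hbv => hgmono a (hvmem a hav) b (hvmem b hbv))
  · -- backward membership
    intro w hw
    obtain ⟨hnd, hfs', ha⟩ := mem_A.mp hw
    have hwmem : ∀ i ∈ w, 1 ≤ i ∧ i ≤ k := by
      intro i hiw
      exact Finset.mem_Icc.mp (mem_of_mem_A hw hiw)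
    rw [mem_A]
    refine ⟨List.Nodup.map_on ?_ hnd, ?_, ?_⟩
    · intro a hav b hbv hab
      rw [← hgf a (hwmem a hav), ← hgf b (hwmem b hbv), hab]
    · ext c
      simp only [List.mem_toFinset, List.mem_map]
      constructor
      · rintro ⟨i, hiw, rfl⟩
        exact hfs i (hwmem i hiw)
      · intro hc
        refine ⟨g c, ?_, hfg c hc⟩
        rw [← List.mem_toFinset, hfs', Finset.mem_Icc]
        exact hgs c hc
    · exact andre_map ha f (fun a hav b hbv => hmono a (hwmem a hav) b (hwmem b hbv))
  · intro v hv
    show (v.map g).map f = v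
    rw [List.map_map]
    conv_rhs => rw [← List.map_id v]
    exact List.map_congr_left (fun a hav => hfg a (mem_of_mem_A hv hav))
  · intro w hw
    show (w.map f).map g = w
    rw [List.map_map]
    conv_rhs => rw [← List.map_id w]
    exact List.map_congr_left (fun i hiw => hgf i (Finset.mem_Icc.mp (mem_of_mem_A hw hiw)))
  · intro v hv
    rw [ldes_map v g (fun a ha b hb => hgmono a (mem_of_mem_A hv ha) b (mem_of_mem_A hv hb))]


/-- word of a permutation as a list -/
def pl {m : ℕ} (σ : Equiv.Perm (Fin m)) : List ℕ :=
  List.ofFn fun i : Fin m => ((σ i : Fin m) : ℕ) + 1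

lemma pl_length {m : ℕ} (σ : Equiv.Perm (Fin m)) : (pl σ).length = m := by simp [pl]

lemma wrd_eq {m : ℕ} (σ : Equiv.Perm (Fin m)) (i : ℕ) (hi : 1 ≤ i) :
    wrd σ i = (pl σ).getD (i-1) 0 := by
  by_cases him : i ≤ m
  · rw [wrd, dif_pos ⟨hi, him⟩]
    rw [List.getD_eq_getElem _ _ (by rw [pl_length]; omega)]
    simp [pl]
  · rw [wrd, dif_neg (by omega)]
    rw [List.getD_eq_default _ _ (by rw [pl_length]; omega)]

lemma permDes_eq {m : ℕ} (σ : Equiv.Perm (Fin m)) : permDes σ = ldes (pl σ) := by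
  rw [permDes, ← ldes_eq_card, pl_length]
  refine Finset.card_nbij' (fun i => i - 1) (fun j => j + 1) ?_ ?_ ?_ ?_
  · intro a ha
    simp only [Finset.mem_coe, Finset.mem_filter, Finset.mem_Icc] at ha
    obtain ⟨⟨h1, h2⟩, h3⟩ := ha
    simp only [Finset.mem_coe, Finset.mem_filter, Finset.mem_range]
    rw [wrd_eq σ (a+1) (by omega), wrd_eq σ a (by omega)] at h3
    have e1 : a + 1 - 1 = a - 1 + 1 := by omega
    rw [e1] at h3
    exact ⟨by omega, h3⟩
  · intro b hb
    simp only [Finset.mem_coe, Finset.mem_filter, Finset.mem_range] at hb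
    obtain ⟨h1, h2⟩ := hb
    simp only [Finset.mem_coe, Finset.mem_filter, Finset.mem_Icc]
    rw [wrd_eq σ (b+1+1) (by omega), wrd_eq σ (b+1) (by omega)]
    have e1 : b + 1 + 1 - 1 = b + 1 := by omega
    have e2 : b + 1 - 1 = b := by omega
    rw [e1, e2]
    exact ⟨by omega, h2⟩
  · intro a ha
    simp only [Finset.mem_coe, Finset.mem_filter, Finset.mem_Icc] at ha
    simp only
    omega
  · intro b _
    simp only
    omega

variable {R : Type*} [CommRing R]

lemma Epoly_eq (x : R) (m : ℕ) :
    Epoly R x m = ∑ l ∈ A (Finset.Icc 1 m), x ^ ldes l := by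
  rw [Epoly]
  refine Finset.sum_bij (fun σ _ => pl σ) ?_ ?_ ?_ ?_
  · intro σ hσ
    rw [Finset.mem_filter] at hσ
    rw [mem_A]
    refine ⟨List.nodup_ofFn.mpr ?_, ?_, hσ.2⟩
    · intro i j hij
      simp only at hij
      exact σ.injective (Fin.val_injective (by omega))
    · ext a
      simp only [pl, List.mem_toFinset, List.mem_ofFn, Set.mem_range, Finset.mem_Icc]
      constructor
      · rintro ⟨i, rfl⟩
        have := (σ i).isLt
        omega
      · rintro ⟨h1, h2⟩
        refine ⟨σ.symm ⟨a - 1, by omega⟩, ?_⟩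
        rw [Equiv.apply_symm_apply]
        simp; omega
  · intro σ hσ τ hτ h
    simp only [pl] at h
    rw [List.ofFn_inj] at h
    ext i
    have := congrFun h i
    omega
  · intro l hl
    have hlen : l.length = m := by
      rw [length_of_mem_A hl, Nat.card_Icc]; omega
    obtain ⟨hnd, hfs, ha⟩ := mem_A.mp hl
    have hmem : ∀ i (hi : i < m), 1 ≤ l.getD i 0 ∧ l.getD i 0 ≤ m := by
      intro i hi
      have : l.getD i 0 ∈ l := by
        rw [List.getD_eq_getElem _ _ (by omega)]
        exact List.getElem_mem _
      have := mem_of_mem_A hl this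
      rw [Finset.mem_Icc] at this
      exact this
    set φ : Fin m → Fin m := fun i => ⟨l.getD i 0 - 1, by
      have := (hmem i i.isLt).2; have := (hmem i i.isLt).1; omega⟩ with hφ
    have hinj : Function.Injective φ := by
      intro i j hij
      have hget : Function.Injective l.get := List.nodup_iff_injective_get.mp hnd
      have h1 := (hmem i i.isLt).1
      have h2 := (hmem j j.isLt).1
      have hv : l.getD i 0 = l.getD j 0 := by
        have := congrArg Fin.val hij
        simp only [hφ] at this
        omega
      rw [List.getD_eq_getElem _ _ (by omega : (i:ℕ) < l.length),
        List.getD_eq_getElem _ _ (by omega : (j:ℕ) < l.length)] at hv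
      have : l.get ⟨i, by omega⟩ = l.get ⟨j, by omega⟩ := by
        simpa [List.get_eq_getElem] using hv
      have := hget this
      exact Fin.ext (by simpa using congrArg Fin.val this)
    have hbij := Finite.injective_iff_bijective.mp hinj
    refine ⟨Equiv.ofBijective φ hbij, ?_, ?_⟩
    · rw [Finset.mem_filter]
      refine ⟨Finset.mem_univ _, ?_⟩
      rw [IsAndrePerm1]
      have : (List.ofFn fun i : Fin m => ((Equiv.ofBijective φ hbij i : Fin m) : ℕ) + 1) = l := by
        refine List.ext_getElem (by simp [hlen]) ?_
        intro i h1 h2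
        rw [List.getElem_ofFn]
        have := (hmem i (by simpa using h1)).1
        simp only [Equiv.ofBijective_apply, hφ]
        rw [← List.getD_eq_getElem _ 0 h2]
        omega
      rw [this]
      exact ha
    · simp only [pl]
      refine List.ext_getElem (by simp [hlen]) ?_
      intro i h1 h2
      rw [List.getElem_ofFn]
      have := (hmem i (by simpa using h1)).1
      simp only [Equiv.ofBijective_apply, hφ]
      rw [← List.getD_eq_getElem _ 0 h2]
      omega
  · intro σ _
    rw [permDes_eq]


lemma tw_one_cons (w : List ℕ) : tw (1 :: w) = [] := by
  simp [tw, List.takeWhile_cons]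

lemma dw_one_cons (w : List ℕ) : dw (1 :: w) = w := by
  simp [dw, List.dropWhile_cons]

lemma tw_dw_append (a b : List ℕ) (ha : (1:ℕ) ∉ a) :
    tw (a ++ 1 :: b) = a ∧ dw (a ++ 1 :: b) = b := by
  have hmem : (1:ℕ) ∈ a ++ 1 :: b := List.mem_append_right _ (List.mem_cons_self)
  exact append_inj_of_not_mem (split_at_one _ hmem).symm (one_not_mem_tw _) ha

variable {R : Type*} [CommRing R]

lemma sum_decomp (x : R) (n : ℕ) :
    ∑ l ∈ A (Finset.Icc 1 (n+2)), x ^ ldes l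
      = (∑ l ∈ A (Finset.Icc 2 (n+2)), x ^ ldes l)
        + ∑ t ∈ (Finset.Icc 2 (n+1)).powerset.filter (·.Nonempty),
            x * (∑ a ∈ A t, x ^ ldes a) * (∑ b ∈ A (Finset.Icc 2 (n+2) \ t), x ^ ldes b) := by
  classical
  rw [← Finset.sum_filter_add_sum_filter_not (A (Finset.Icc 1 (n+2))) (fun l => tw l = [])]
  congr 1
  · -- lists starting with 1  ↔  A (Icc 2 (n+2))
    refine Finset.sum_nbij' (fun l => dw l) (fun w => 1 :: w) ?_ ?_ ?_ ?_ ?_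
    · intro l hl
      rw [Finset.mem_filter] at hl
      obtain ⟨hlA, htw⟩ := hl
      obtain ⟨hnd, hfs, ha⟩ := mem_A.mp hlA
      have h1 : (1:ℕ) ∈ l := by
        rw [← List.mem_toFinset, hfs, Finset.mem_Icc]; omega
      have hN : (n+2:ℕ) ∈ l := by
        rw [← List.mem_toFinset, hfs, Finset.mem_Icc]; omega
      have hmem : ∀ a ∈ l, 1 ≤ a ∧ a ≤ n + 2 := by
        intro a hal
        have := List.mem_toFinset.mpr hal
        rw [hfs, Finset.mem_Icc] at this
        exact this
      obtain ⟨hndt, hndd, h1d, hdisj⟩ := split_facts hnd h1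
      obtain ⟨hat, had, hor⟩ := (andre_char hnd hmem h1 hN).mp ha
      rw [mem_A]
      refine ⟨hndd, ?_, had⟩
      ext c
      rw [List.mem_toFinset, Finset.mem_Icc]
      constructor
      · intro hc
        have h2 := (hmem c (mem_dw hc)).2
        have h3 : c ≠ 1 := fun hc' => h1d (hc' ▸ hc)
        have h4 := (hmem c (mem_dw hc)).1
        omega
      · rintro ⟨hc1, hc2⟩
        have : c ∈ l := by
          rw [← List.mem_toFinset, hfs, Finset.mem_Icc]; omega
        rw [split_at_one l h1, List.mem_append, List.mem_cons] at this
        rcases this with h' | h' 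
        · rw [htw] at h'; simp at h'
        · rcases h' with h'' | h''
          · omega
          · exact h''
    · intro w hw
      obtain ⟨hnd, hfs, ha⟩ := mem_A.mp hw
      have hgt : ∀ a ∈ w, 1 < a := by
        intro a haw
        have := List.mem_toFinset.mpr haw
        rw [hfs, Finset.mem_Icc] at this
        omega
      rw [Finset.mem_filter]
      constructor
      · rw [mem_A]
        refine ⟨?_, ?_, ?_⟩
        · rw [List.nodup_cons]
          exact ⟨fun hc => by have := hgt 1 hc; omega, hnd⟩
        · ext c
          simp only [List.toFinset_cons, Finset.mem_insert, List.mem_toFinset, Finset.mem_Icc]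
          constructor
          · rintro (rfl | hc)
            · omega
            · have h2 : c ∈ w.toFinset := List.mem_toFinset.mpr hc
              rw [hfs, Finset.mem_Icc] at h2
              omega
          · rintro ⟨hh1, hh2⟩
            by_cases hc1 : c = 1
            · exact Or.inl hc1
            · right
              rw [← List.mem_toFinset, hfs, Finset.mem_Icc]
              omega
        · have : IsAndre1 ([] ++ 1 :: w) :=
            IsAndre1.node [] w 1 (by simpa using hgt) IsAndre1.nil ha (Or.inl rfl)
          simpa using this
      · exact tw_one_cons w
    · intro l hl
      rw [Finset.mem_filter] at hl
      obtain ⟨hlA, htw⟩ := hl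
      obtain ⟨hnd, hfs, ha⟩ := mem_A.mp hlA
      have h1 : (1:ℕ) ∈ l := by
        rw [← List.mem_toFinset, hfs, Finset.mem_Icc]; omega
      conv_rhs => rw [split_at_one l h1, htw]
      rfl
    · intro w _
      exact dw_one_cons w
    · intro l hl
      rw [Finset.mem_filter] at hl
      obtain ⟨hlA, htw⟩ := hl
      obtain ⟨hnd, hfs, ha⟩ := mem_A.mp hlA
      have h1 : (1:ℕ) ∈ l := by
        rw [← List.mem_toFinset, hfs, Finset.mem_Icc]; omega
      have hgt : ∀ a ∈ dw l, 1 < a := by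
        intro a had
        obtain ⟨-, -, h1d, -⟩ := split_facts hnd h1
        have := List.mem_toFinset.mpr (mem_dw had)
        rw [hfs, Finset.mem_Icc] at this
        have : a ≠ 1 := fun hc => h1d (hc ▸ had)
        have := List.mem_toFinset.mpr (mem_dw had)
        rw [hfs, Finset.mem_Icc] at this
        omega
      have : l = 1 :: dw l := by
        conv_lhs => rw [split_at_one l h1, htw]
        rfl
      conv_lhs => rw [this, ldes_one_cons _ hgt]
  · -- lists not starting with 1
    have inner : ∀ t : Finset ℕ,
        x * (∑ a ∈ A t, x ^ ldes a) * (∑ b ∈ A (Finset.Icc 2 (n+2) \ t), x ^ ldes b)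
          = ∑ p ∈ A t ×ˢ A (Finset.Icc 2 (n+2) \ t), x ^ (ldes p.1 + ldes p.2 + 1) := by
      intro t
      rw [Finset.sum_product]
      have h' : ∀ a ∈ A t, ∑ b ∈ A (Finset.Icc 2 (n+2) \ t), x ^ (ldes a + ldes b + 1)
          = x * x ^ ldes a * ∑ b ∈ A (Finset.Icc 2 (n+2) \ t), x ^ ldes b := by
        intro a _
        rw [Finset.mul_sum]
        refine Finset.sum_congr rfl (fun b _ => ?_)
        rw [pow_add, pow_add, pow_one]
        ring
      rw [Finset.sum_congr rfl h', ← Finset.sum_mul, ← Finset.mul_sum]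
    simp_rw [inner]
    rw [← Finset.sum_sigma ((Finset.Icc 2 (n+1)).powerset.filter (·.Nonempty))
      (fun t => A t ×ˢ A (Finset.Icc 2 (n+2) \ t))
      (fun p => x ^ (ldes p.2.1 + ldes p.2.2 + 1))]
    refine Finset.sum_nbij' (fun l => ⟨(tw l).toFinset, (tw l, dw l)⟩)
      (fun p => p.2.1 ++ 1 :: p.2.2) ?_ ?_ ?_ ?_ ?_
    · -- forward membership
      intro l hl
      rw [Finset.mem_filter] at hl
      obtain ⟨hlA, htw⟩ := hl
      obtain ⟨hnd, hfs, ha⟩ := mem_A.mp hlA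
      have h1 : (1:ℕ) ∈ l := by
        rw [← List.mem_toFinset, hfs, Finset.mem_Icc]; omega
      have hN : (n+2:ℕ) ∈ l := by
        rw [← List.mem_toFinset, hfs, Finset.mem_Icc]; omega
      have hmem : ∀ a ∈ l, 1 ≤ a ∧ a ≤ n + 2 := by
        intro a hal
        have := List.mem_toFinset.mpr hal
        rw [hfs, Finset.mem_Icc] at this
        exact this
      obtain ⟨hndt, hndd, h1d, hdisj⟩ := split_facts hnd h1
      obtain ⟨hat, had, hor⟩ := (andre_char hnd hmem h1 hN).mp ha
      have hNdw : (n+2:ℕ) ∈ dw l := by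
        rcases hor with h' | h'
        · exact absurd h' htw
        · exact h'
      rw [Finset.mem_sigma, Finset.mem_product]
      refine ⟨?_, ?_, ?_⟩
      · rw [Finset.mem_filter, Finset.mem_powerset]
        constructor
        · intro c hc
          rw [List.mem_toFinset] at hc
          have hb := hmem c (mem_tw hc)
          have hc1 := ne_one_of_mem_tw hc
          have hcn : c ≠ n + 2 := by
            intro hceq
            exact hdisj hc (hceq ▸ List.mem_cons_of_mem _ hNdw)
          rw [Finset.mem_Icc]
          omega
        · obtain ⟨c, hc⟩ := List.exists_mem_of_ne_nil _ htw
          exact ⟨c, List.mem_toFinset.mpr hc⟩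
      · exact mem_A.mpr ⟨hndt, rfl, hat⟩
      · refine mem_A.mpr ⟨hndd, ?_, had⟩
        ext c
        rw [List.mem_toFinset, Finset.mem_sdiff, Finset.mem_Icc, List.mem_toFinset]
        constructor
        · intro hc
          have hb := hmem c (mem_dw hc)
          have hc1 : c ≠ 1 := fun h' => h1d (h' ▸ hc)
          refine ⟨by omega, fun h' => hdisj h' (List.mem_cons_of_mem _ hc)⟩
        · rintro ⟨⟨hc2, hcn⟩, hct⟩
          have : c ∈ l := by
            rw [← List.mem_toFinset, hfs, Finset.mem_Icc]; omega
          rw [split_at_one l h1, List.mem_append, List.mem_cons] at this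
          rcases this with h' | h'
          · exact absurd h' hct
          · rcases h' with h'' | h''
            · omega
            · exact h''
    · -- backward membership
      rintro ⟨t, a, b⟩ hp
      simp only [Finset.mem_sigma, Finset.mem_product] at hp
      obtain ⟨htT, haA, hbA⟩ := hp
      rw [Finset.mem_filter, Finset.mem_powerset] at htT
      obtain ⟨hsub, hne⟩ := htT
      obtain ⟨hnda, hfsa, haa⟩ := mem_A.mp haA
      obtain ⟨hndb, hfsb, hab⟩ := mem_A.mp hbA
      have hamem : ∀ c ∈ a, 2 ≤ c ∧ c ≤ n + 1 := by
        intro c hc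
        have : c ∈ t := by rw [← hfsa]; exact List.mem_toFinset.mpr hc
        have := Finset.mem_Icc.mp (hsub this)
        exact this
      have hbmem : ∀ c ∈ b, (2 ≤ c ∧ c ≤ n + 2) ∧ c ∉ t := by
        intro c hc
        have : c ∈ Finset.Icc 2 (n+2) \ t := by
          rw [← hfsb]; exact List.mem_toFinset.mpr hc
        rw [Finset.mem_sdiff, Finset.mem_Icc] at this
        exact this
      have h1a : (1:ℕ) ∉ a := fun h' => by have := hamem 1 h'; omega
      have hn2b : (n+2:ℕ) ∈ b := by
        rw [← List.mem_toFinset, hfsb, Finset.mem_sdiff, Finset.mem_Icc]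
        refine ⟨⟨by omega, le_refl _⟩, fun h' => ?_⟩
        have := Finset.mem_Icc.mp (hsub h')
        omega
      rw [Finset.mem_filter]
      constructor
      · rw [mem_A]
        refine ⟨?_, ?_, ?_⟩
        · refine List.Nodup.append hnda ?_ ?_
          · rw [List.nodup_cons]
            exact ⟨fun h' => by have := hbmem 1 h'; omega, hndb⟩
          · intro c hca hcb
            rcases List.mem_cons.mp hcb with rfl | h'
            · exact h1a hca
            · have h2 := hamem c hca
              have : c ∈ t := by rw [← hfsa]; exact List.mem_toFinset.mpr hca
              exact (hbmem c h').2 this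
        · ext c
          rw [List.toFinset_append, List.toFinset_cons, Finset.mem_union, Finset.mem_insert,
            hfsa, hfsb, Finset.mem_sdiff, Finset.mem_Icc, Finset.mem_Icc]
          constructor
          · rintro (hc | rfl | hc)
            · have := Finset.mem_Icc.mp (hsub hc); omega
            · omega
            · omega
          · rintro ⟨hc1, hc2⟩
            by_cases hceq : c = 1
            · exact Or.inr (Or.inl hceq)
            · by_cases hct : c ∈ t
              · exact Or.inl hct
              · exact Or.inr (Or.inr ⟨⟨by omega, hc2⟩, hct⟩)
        · refine IsAndre1.node a b 1 ?_ haa hab ?_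
          · intro c hc
            rcases List.mem_append.mp hc with h' | h'
            · have := hamem c h'; omega
            · have := (hbmem c h').1; omega
          · refine Or.inr ⟨n+2, hn2b, fun c hc => ?_⟩
            have := hamem c hc; omega
      · have hane : a ≠ [] := by
          intro h'
          obtain ⟨c, hc⟩ := hne
          rw [← hfsa, h'] at hc
          simp at hc
        rw [(tw_dw_append a b h1a).1]
        exact hane
    · -- left inverse
      intro l hl
      rw [Finset.mem_filter] at hl
      obtain ⟨hlA, htw⟩ := hl
      obtain ⟨hnd, hfs, ha⟩ := mem_A.mp hlA
      have h1 : (1:ℕ) ∈ l := by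
        rw [← List.mem_toFinset, hfs, Finset.mem_Icc]; omega
      exact (split_at_one l h1).symm
    · -- right inverse
      rintro ⟨t, a, b⟩ hp
      simp only [Finset.mem_sigma, Finset.mem_product] at hp
      obtain ⟨htT, haA, hbA⟩ := hp
      rw [Finset.mem_filter, Finset.mem_powerset] at htT
      obtain ⟨hnda, hfsa, haa⟩ := mem_A.mp haA
      have h1a : (1:ℕ) ∉ a := by
        intro h'
        have : (1:ℕ) ∈ t := by rw [← hfsa]; exact List.mem_toFinset.mpr h'
        have := Finset.mem_Icc.mp (htT.1 this)
        omega
      obtain ⟨e1, e2⟩ := tw_dw_append a b h1a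
      simp only [e1, e2]
      rw [show a.toFinset = t from hfsa]
    · -- values
      intro l hl
      rw [Finset.mem_filter] at hl
      obtain ⟨hlA, htw⟩ := hl
      obtain ⟨hnd, hfs, ha⟩ := mem_A.mp hlA
      have h1 : (1:ℕ) ∈ l := by
        rw [← List.mem_toFinset, hfs, Finset.mem_Icc]; omega
      have hN : (n+2:ℕ) ∈ l := by
        rw [← List.mem_toFinset, hfs, Finset.mem_Icc]; omega
      have hmem : ∀ a ∈ l, 1 ≤ a ∧ a ≤ n + 2 := by
        intro a hal
        have := List.mem_toFinset.mpr hal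
        rw [hfs, Finset.mem_Icc] at this
        exact this
      obtain ⟨hndt, hndd, h1d, hdisj⟩ := split_facts hnd h1
      obtain ⟨hat, had, hor⟩ := (andre_char hnd hmem h1 hN).mp ha
      have hNdw : (n+2:ℕ) ∈ dw l := by
        rcases hor with h' | h'
        · exact absurd h' htw
        · exact h'
      have hgt1 : ∀ c ∈ tw l, 1 < c := by
        intro c hc
        have := hmem c (mem_tw hc)
        have := ne_one_of_mem_tw hc
        omega
      have hgt2 : ∀ c ∈ dw l, 1 < c := by
        intro c hc
        have := hmem c (mem_dw hc)
        have : c ≠ 1 := fun h' => h1d (h' ▸ hc)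
        have := hmem c (mem_dw hc)
        omega
      conv_lhs => rw [split_at_one l h1]
      rw [ldes_decomp (tw l) (dw l) htw (List.ne_nil_of_mem hNdw) hgt1 hgt2]



lemma card_S2 (n : ℕ) : (Finset.Icc 2 (n+2)).card = n + 1 := by
  rw [Nat.card_Icc]; omega

lemma card_U (n : ℕ) : (Finset.Icc 2 (n+1)).card = n := by
  rw [Nat.card_Icc]; omega

end AndreAux

open AndreAux in
/-- E_{n+2}(x) = E_{n+1}(x) + x Σ_{j=1}^n C(n,j) E_j(x) E_{n+1−j}(x). -/
theorem andre_descent_polynomial_recurrence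
    (R : Type*) [CommRing R] (x : R) (n : ℕ) :
    Epoly R x (n + 2) =
      Epoly R x (n + 1) +
        x * ∑ j ∈ Finset.Icc 1 n, (n.choose j : R) * Epoly R x j * Epoly R x (n + 1 - j) := by
  classical
  rw [Epoly_eq x (n+2), sum_decomp x n]
  congr 1
  · rw [sum_A_eq x (Finset.Icc 2 (n+2)), card_S2 n, ← Epoly_eq x (n+1)]
  · -- second summand
    have step1 : ∀ t ∈ (Finset.Icc 2 (n+1)).powerset.filter (·.Nonempty),
        x * (∑ a ∈ A t, x ^ ldes a) * (∑ b ∈ A (Finset.Icc 2 (n+2) \ t), x ^ ldes b)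
          = x * Epoly R x t.card * Epoly R x (n + 1 - t.card) := by
      intro t ht
      rw [Finset.mem_filter, Finset.mem_powerset] at ht
      have hsub : t ⊆ Finset.Icc 2 (n+2) :=
        ht.1.trans (Finset.Icc_subset_Icc (le_refl _) (by omega))
      rw [sum_A_eq x t, ← Epoly_eq x t.card]
      rw [sum_A_eq x (Finset.Icc 2 (n+2) \ t)]
      rw [Finset.card_sdiff_of_subset hsub, card_S2 n, ← Epoly_eq x (n + 1 - t.card)]
    rw [Finset.sum_congr rfl step1]
    rw [Finset.sum_filter]
    rw [Finset.sum_powerset]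
    have step2 : ∀ j ∈ Finset.range ((Finset.Icc 2 (n+1)).card + 1),
        (∑ t ∈ Finset.powersetCard j (Finset.Icc 2 (n+1)),
          if t.Nonempty then x * Epoly R x t.card * Epoly R x (n + 1 - t.card) else 0)
          = if j ≠ 0 then (n.choose j : R) * (x * Epoly R x j * Epoly R x (n + 1 - j)) else 0 := by
      intro j _
      have hconst : ∀ t ∈ Finset.powersetCard j (Finset.Icc 2 (n+1)),
          (if t.Nonempty then x * Epoly R x t.card * Epoly R x (n + 1 - t.card) else 0)
            = if j ≠ 0 then x * Epoly R x j * Epoly R x (n + 1 - j) else 0 := by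
        intro t htj
        obtain ⟨-, hcard⟩ := Finset.mem_powersetCard.mp htj
        subst hcard
        have : t.Nonempty ↔ t.card ≠ 0 := by
          rw [Finset.nonempty_iff_ne_empty]
          constructor
          · intro h' h''
            exact h' (Finset.card_eq_zero.mp h'')
          · intro h' h''
            exact h' (by rw [h'']; rfl)
        by_cases hj : t.Nonempty
        · rw [if_pos hj, if_pos (this.mp hj)]
        · rw [if_neg hj, if_neg (fun h' => hj (this.mpr h'))]
      rw [Finset.sum_congr rfl hconst, Finset.sum_const, Finset.card_powersetCard, card_U n]
      by_cases hj : j ≠ 0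
      · rw [if_pos hj, if_pos hj, nsmul_eq_mul]
      · rw [if_neg hj, smul_zero, if_neg hj]
    rw [Finset.sum_congr rfl step2, card_U n]
    have step3 : (Finset.range (n+1)).filter (fun j => j ≠ 0) = Finset.Icc 1 n := by
      ext j
      simp only [Finset.mem_filter, Finset.mem_range, Finset.mem_Icc]
      omega
    rw [← Finset.sum_filter, step3, Finset.mul_sum]
    refine Finset.sum_congr rfl (fun j _ => ?_)
    ring
end
end

section
/- There is a bijection φ on S_n such that for every permutation σ of [n], (exc-hat, drop, fix-hat)(σ) = (basc, des, suc)(φ(σ)) and φ(σ)(1) = σ(1), where exc-hat(σ) counts indices i ≥ 2 with σ(i) > i, fix-hat(σ) counts indices i ≥ 2 with σ(i) = i, drop(σ) counts indices with σ(i) < i, basc(τ) counts indices i ∈ [n−1] with τ(i+1) ≥ τ(i)+2, des(τ) counts indices i with τ(i) > τ(i+1), and suc(τ) counts indices i with τ(i+1) = τ(i)+1. -/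
open Finset

/-- number of excedances at positions i ≥ 2 (1-based), i.e. σ(i) > i with i ≥ 2 -/
def permExcHat {n : ℕ} (σ : Equiv.Perm (Fin n)) : ℕ :=
  (Finset.univ.filter fun i : Fin n => 1 ≤ (i : ℕ) ∧ i < σ i).card

/-- number of fixed points at positions i ≥ 2 (1-based) -/
def permFixHat {n : ℕ} (σ : Equiv.Perm (Fin n)) : ℕ :=
  (Finset.univ.filter fun i : Fin n => 1 ≤ (i : ℕ) ∧ σ i = i).card

/-- number of drops: σ(i) < i -/
def permDrop {n : ℕ} (σ : Equiv.Perm (Fin n)) : ℕ :=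
  (Finset.univ.filter fun i : Fin n => σ i < i).card

/-- number of big ascents: i ∈ [n−1] with σ(i+1) ≥ σ(i) + 2 -/
def permBasc {n : ℕ} (σ : Equiv.Perm (Fin n)) : ℕ :=
  ((Finset.Icc 1 (n - 1)).filter fun i => wrd σ i + 2 ≤ wrd σ (i + 1)).card

/-- number of successions: i ∈ [n−1] with σ(i+1) = σ(i) + 1 -/
def permSuc {n : ℕ} (σ : Equiv.Perm (Fin n)) : ℕ :=
  ((Finset.Icc 1 (n - 1)).filter fun i => wrd σ (i + 1) = wrd σ i + 1).card

namespace SuccBij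

open Equiv Equiv.Perm

variable {n : ℕ}

noncomputable def cyc (π : Equiv.Perm (Fin n)) (x : Fin n) : Finset (Fin n) :=
  @Finset.filter _ (fun y => π.SameCycle x y) (Classical.decPred _) Finset.univ

lemma mem_cyc {π : Equiv.Perm (Fin n)} {x y : Fin n} : y ∈ cyc π x ↔ π.SameCycle x y := by
  simp [cyc]

lemma cyc_nonempty (π : Equiv.Perm (Fin n)) (x : Fin n) : (cyc π x).Nonempty :=
  ⟨x, mem_cyc.2 (Equiv.Perm.SameCycle.refl _ _)⟩

noncomputable def Mx (π : Equiv.Perm (Fin n)) (x : Fin n) : Fin n :=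
  (cyc π x).max' (cyc_nonempty π x)

lemma sameCycle_Mx (π : Equiv.Perm (Fin n)) (x : Fin n) : π.SameCycle x (Mx π x) :=
  mem_cyc.1 ((cyc π x).max'_mem _)

lemma le_Mx {π : Equiv.Perm (Fin n)} {x y : Fin n} (h : π.SameCycle x y) : y ≤ Mx π x :=
  Finset.le_max' _ _ (mem_cyc.2 h)

lemma self_le_Mx (π : Equiv.Perm (Fin n)) (x : Fin n) : x ≤ Mx π x :=
  le_Mx (Equiv.Perm.SameCycle.refl _ _)

lemma Mx_congr {π : Equiv.Perm (Fin n)} {x y : Fin n} (h : π.SameCycle x y) :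
    Mx π x = Mx π y :=
  le_antisymm (le_Mx (h.symm.trans (sameCycle_Mx π x))) (le_Mx (h.trans (sameCycle_Mx π y)))

lemma Mx_apply (π : Equiv.Perm (Fin n)) (x : Fin n) : Mx π (π x) = Mx π x :=
  (Mx_congr (Equiv.Perm.sameCycle_apply_right.mpr (Equiv.Perm.SameCycle.refl _ _))).symm

lemma Mx_Mx (π : Equiv.Perm (Fin n)) (x : Fin n) : Mx π (Mx π x) = Mx π x :=
  (Mx_congr (sameCycle_Mx π x)).symm

lemma Mx_fixed {π : Equiv.Perm (Fin n)} {x : Fin n} (h : π x = x) : Mx π x = x := by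
  obtain ⟨i, _, _, hi⟩ := (sameCycle_Mx π x).exists_pow_eq''
  rw [← hi, Equiv.Perm.pow_apply_eq_self_of_apply_eq_self h]

lemma exists_dist (π : Equiv.Perm (Fin n)) (x : Fin n) :
    ∃ d : ℕ, (π ^ (d + 1)) (Mx π x) = x := by
  obtain ⟨i, hi0, _, hi⟩ := (sameCycle_Mx π x).symm.exists_pow_eq''
  exact ⟨i - 1, by rwa [Nat.sub_add_cancel hi0]⟩

noncomputable def dist (π : Equiv.Perm (Fin n)) (x : Fin n) : ℕ :=
  @Nat.find _ (Classical.decPred _) (exists_dist π x)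

lemma dist_spec (π : Equiv.Perm (Fin n)) (x : Fin n) :
    (π ^ (dist π x + 1)) (Mx π x) = x :=
  @Nat.find_spec _ (Classical.decPred _) (exists_dist π x)

lemma dist_le {π : Equiv.Perm (Fin n)} {x : Fin n} {d : ℕ}
    (h : (π ^ (d + 1)) (Mx π x) = x) : dist π x ≤ d :=
  @Nat.find_le _ _ (Classical.decPred _) (exists_dist π x) h

lemma dist_min {π : Equiv.Perm (Fin n)} {x : Fin n} {d : ℕ}
    (h : d < dist π x) : (π ^ (d + 1)) (Mx π x) ≠ x :=
  @Nat.find_min _ (Classical.decPred _) (exists_dist π x) _ h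

lemma dist_applyMx (π : Equiv.Perm (Fin n)) (x : Fin n) : dist π (π (Mx π x)) = 0 := by
  have h : (π ^ (0 + 1)) (Mx π (π (Mx π x))) = π (Mx π x) := by
    rw [Mx_apply, Mx_Mx, pow_one]
  exact Nat.le_zero.mp (dist_le h)

lemma dist_apply {π : Equiv.Perm (Fin n)} {x : Fin n} (h : x ≠ Mx π x) :
    dist π (π x) = dist π x + 1 := by
  have hM : Mx π (π x) = Mx π x := Mx_apply π x
  have hub : dist π (π x) ≤ dist π x + 1 := by
    apply dist_le
    rw [hM, pow_succ', Equiv.Perm.mul_apply, dist_spec]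
  rcases Nat.lt_or_ge (dist π (π x)) (dist π x + 1) with hlt | hge
  · exfalso
    have he : (π ^ (dist π (π x) + 1)) (Mx π x) = π x := by
      rw [← hM]; exact dist_spec _ _
    have he' : (π ^ (dist π (π x))) (Mx π x) = x := by
      apply π.injective
      rw [← Equiv.Perm.mul_apply, ← pow_succ']; exact he
    rcases Nat.eq_zero_or_pos (dist π (π x)) with h0 | hpos
    · rw [h0, pow_zero] at he'
      exact h (Eq.symm he')
    · exact dist_min (show dist π (π x) - 1 < dist π x by omega)
        (by rwa [Nat.sub_add_cancel hpos])
  · omega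

lemma dist_lt_Mx {π : Equiv.Perm (Fin n)} {x : Fin n} (h : x ≠ Mx π x) :
    dist π x < dist π (Mx π x) := by
  by_contra hle
  push_neg at hle
  set D := dist π (Mx π x) with hD
  set e := dist π x with he
  have hDs : (π ^ (D + 1)) (Mx π x) = Mx π x := by
    have := dist_spec π (Mx π x); rwa [Mx_Mx] at this
  have hkey : (π ^ (e - D + (D + 1))) (Mx π x) = x := by
    rw [show e - D + (D + 1) = e + 1 by omega]; exact dist_spec π x
  rw [pow_add, Equiv.Perm.mul_apply, hDs] at hkey
  rcases Nat.eq_zero_or_pos (e - D) with h0 | hpos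
  · rw [h0, pow_zero] at hkey
    exact h (Eq.symm hkey)
  · exact dist_min (show e - D - 1 < e by omega) (by rwa [Nat.sub_add_cancel hpos])

noncomputable def key (π : Equiv.Perm (Fin n)) (x : Fin n) : ℕ ×ₗ ℕ :=
  toLex (n - 1 - (Mx π x : ℕ), dist π x)

lemma key_lt_iff {π : Equiv.Perm (Fin n)} {x y : Fin n} :
    key π x < key π y ↔
      ((Mx π y : ℕ) < (Mx π x : ℕ) ∨
        ((Mx π x : ℕ) = (Mx π y : ℕ) ∧ dist π x < dist π y)) := by
  have hx := (Mx π x).isLt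
  have hy := (Mx π y).isLt
  rw [key, key, Prod.Lex.lt_iff]
  simp only [ofLex_toLex]
  omega

lemma key_le_iff {π : Equiv.Perm (Fin n)} {x y : Fin n} :
    key π x ≤ key π y ↔
      ((Mx π y : ℕ) < (Mx π x : ℕ) ∨
        ((Mx π x : ℕ) = (Mx π y : ℕ) ∧ dist π x ≤ dist π y)) := by
  have hx := (Mx π x).isLt
  have hy := (Mx π y).isLt
  rw [key, key, Prod.Lex.le_iff]
  simp only [ofLex_toLex]
  omega

lemma key_inj (π : Equiv.Perm (Fin n)) : Function.Injective (key π) := by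
  intro x y hxy
  have h := toLex.injective hxy
  have h1 : n - 1 - (Mx π x : ℕ) = n - 1 - (Mx π y : ℕ) := congrArg Prod.fst h
  have h2 : dist π x = dist π y := congrArg Prod.snd h
  have hM : Mx π x = Mx π y := by
    have hx := (Mx π x).isLt
    have hy := (Mx π y).isLt
    exact Fin.ext (by omega)
  calc x = (π ^ (dist π x + 1)) (Mx π x) := (dist_spec π x).symm
    _ = (π ^ (dist π y + 1)) (Mx π y) := by rw [h2, hM]
    _ = y := dist_spec π y

noncomputable def tau (π : Equiv.Perm (Fin n)) : Equiv.Perm (Fin n) :=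
  Tuple.sort (key π)

lemma key_tau_strictMono (π : Equiv.Perm (Fin n)) :
    StrictMono (fun i => key π (tau π i)) :=
  (Tuple.monotone_sort (key π)).strictMono_of_injective
    ((key_inj π).comp (tau π).injective)

lemma key_tau_lt_iff {π : Equiv.Perm (Fin n)} {i j : Fin n} :
    key π (tau π i) < key π (tau π j) ↔ i < j :=
  (key_tau_strictMono π).lt_iff_lt

lemma key_tau_le_iff {π : Equiv.Perm (Fin n)} {i j : Fin n} :
    key π (tau π i) ≤ key π (tau π j) ↔ i ≤ j :=
  (key_tau_strictMono π).le_iff_le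

/-- within-cycle adjacency: if `tau π j` is not its cycle max, the next letter is its image. -/
lemma tau_succ {π : Equiv.Perm (Fin n)} {j : Fin n} (hj : (j : ℕ) + 1 < n)
    (hx : tau π j ≠ Mx π (tau π j)) :
    tau π ⟨(j : ℕ) + 1, hj⟩ = π (tau π j) := by
  set x := tau π j with hxdef
  have hC : (Mx π (π x) : ℕ) = (Mx π x : ℕ) := by rw [Mx_apply]
  have hD : dist π (π x) = dist π x + 1 := dist_apply hx
  have hkx : key π x < key π (π x) := key_lt_iff.2 (Or.inr ⟨hC.symm, by omega⟩)
  set p := (tau π)⁻¹ (π x) with hp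
  have htp : tau π p = π x := Equiv.Perm.eq_inv_iff_eq.mp rfl
  have hjp : j < p := key_tau_lt_iff.1 (by rwa [htp])
  have h1 : key π (tau π ⟨(j : ℕ) + 1, hj⟩) ≤ key π (π x) := by
    rw [← htp]
    exact key_tau_le_iff.2 (by rw [Fin.le_def]; exact Fin.lt_def.1 hjp)
  have h2 : key π x < key π (tau π ⟨(j : ℕ) + 1, hj⟩) := by
    rw [hxdef]
    exact key_tau_lt_iff.2 (Fin.lt_def.2 (Nat.lt_succ_self _))
  apply key_inj π
  have h1' := key_le_iff.1 h1
  have h2' := key_lt_iff.1 h2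
  refine le_antisymm h1 (key_le_iff.2 ?_)
  rw [hC, hD] at h1' ⊢
  omega

/-- if `tau π j` is its cycle max, every later letter is smaller. -/
lemma tau_lt_of_max {π : Equiv.Perm (Fin n)} {j j' : Fin n}
    (hmax : tau π j = Mx π (tau π j)) (hjj' : j < j') :
    tau π j' < tau π j := by
  have hk := (key_tau_lt_iff (π := π)).2 hjj'
  have hMj : (Mx π (tau π j) : ℕ) = (tau π j : ℕ) := by rw [← hmax]
  have hne : (tau π j' : ℕ) ≠ (tau π j : ℕ) := by
    intro hcc
    exact ne_of_gt hjj' ((tau π).injective (Fin.ext hcc))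
  have hsle : (tau π j' : ℕ) ≤ (Mx π (tau π j') : ℕ) := Fin.le_def.1 (self_le_Mx π _)
  rcases key_lt_iff.1 hk with hA | ⟨hA, _⟩ <;> rw [Fin.lt_def] <;> omega

lemma max_of_rec {π : Equiv.Perm (Fin n)} {j : Fin n}
    (h : ∀ j', j < j' → tau π j' < tau π j) :
    tau π j = Mx π (tau π j) := by
  by_contra hx
  set p := (tau π)⁻¹ (Mx π (tau π j)) with hp
  have htp : tau π p = Mx π (tau π j) := Equiv.Perm.eq_inv_iff_eq.mp rfl
  have hkey : key π (tau π j) < key π (tau π p) := by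
    rw [htp]
    refine key_lt_iff.2 (Or.inr ⟨?_, dist_lt_Mx hx⟩)
    rw [Mx_Mx]
  have hjp : j < p := key_tau_lt_iff.1 hkey
  have hlt := h p hjp
  rw [htp] at hlt
  exact absurd hlt (not_lt.2 (self_le_Mx _ _))

lemma tau_last_max (π : Equiv.Perm (Fin n)) (hn : 0 < n) :
    tau π ⟨n - 1, by omega⟩ = Mx π (tau π ⟨n - 1, by omega⟩) := by
  apply max_of_rec
  intro j' hj'
  have h1 := Fin.lt_def.1 hj'
  have h2 := j'.isLt
  simp only at h1
  omega

lemma tau_zero (π : Equiv.Perm (Fin n)) (hn : 0 < n) :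
    tau π ⟨0, hn⟩ = π ⟨n - 1, by omega⟩ := by
  set lst : Fin n := ⟨n - 1, by omega⟩ with hlst
  have hMl : Mx π lst = lst := by
    refine le_antisymm ?_ (self_le_Mx π lst)
    rw [Fin.le_def]
    have := (Mx π lst).isLt
    simp only [hlst]
    omega
  apply key_inj π
  refine le_antisymm ?_ ?_
  · have h0 : (⟨0, hn⟩ : Fin n) ≤ (tau π)⁻¹ (π lst) := Fin.le_def.2 (Nat.zero_le _)
    have h := (key_tau_le_iff (π := π)).2 h0
    rwa [show ∀ (f : Equiv.Perm (Fin n)) y, f (f⁻¹ y) = y from fun f y => Equiv.Perm.eq_inv_iff_eq.mp rfl] at h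
  · apply key_le_iff.2
    have h1 : (Mx π (π lst) : ℕ) = n - 1 := by rw [Mx_apply, hMl]
    have h2 : dist π (π lst) = 0 := by
      have := dist_applyMx π lst; rwa [hMl] at this
    have h3 := (Mx π (tau π ⟨0, hn⟩)).isLt
    omega

def PiOf (σ : Equiv.Perm (Fin n)) : Equiv.Perm (Fin n) := σ * finRotate n

lemma PiOf_last (σ : Equiv.Perm (Fin n)) (hn : 0 < n) :
    PiOf σ ⟨n - 1, by omega⟩ = σ ⟨0, hn⟩ := by
  cases n with
  | zero => omega
  | succ m =>
    show σ (finRotate (m + 1) ⟨m + 1 - 1, _⟩) = σ ⟨0, _⟩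
    congr 1
    have h : (⟨m + 1 - 1, by omega⟩ : Fin (m + 1)) = Fin.last m := by
      ext; simp
    rw [h, finRotate_last]
    rfl

lemma PiOf_mid (σ : Equiv.Perm (Fin n)) {x : Fin n} (h : (x : ℕ) + 1 < n) :
    PiOf σ x = σ ⟨(x : ℕ) + 1, h⟩ := by
  cases n with
  | zero => exact absurd x.isLt (by omega)
  | succ m =>
    show σ (finRotate (m + 1) x) = _
    congr 1
    have hne : x ≠ Fin.last m := by
      intro hl
      rw [hl] at h
      simp at h
    ext
    rw [coe_finRotate_of_ne_last hne]


variable {n : ℕ}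
attribute [irreducible] cyc Mx dist key tau

lemma wrd_eq (τ : Equiv.Perm (Fin n)) {i : ℕ} (h1 : 1 ≤ i) (h2 : i ≤ n) (hh : i - 1 < n) :
    wrd τ i = ((τ ⟨i - 1, hh⟩ : Fin n) : ℕ) + 1 := by
  unfold wrd
  rw [dif_pos ⟨h1, h2⟩]

lemma sameCycle_self_apply (π : Equiv.Perm (Fin n)) (x : Fin n) : π.SameCycle x (π x) :=
  Equiv.Perm.sameCycle_apply_right.mpr (Equiv.Perm.SameCycle.refl _ _)

lemma apply_le_Mx (π : Equiv.Perm (Fin n)) (x : Fin n) : ((π x : Fin n) : ℕ) ≤ (Mx π x : ℕ) :=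
  Fin.le_def.1 (le_Mx (sameCycle_self_apply π x))

/-- generic count for ascent-type statistics (successions and big ascents). -/
lemma tau_count (π : Equiv.Perm (Fin n)) (P : ℕ → ℕ → Prop) [∀ a b : ℕ, Decidable (P a b)]
    (Q : Fin n → Prop) [DecidablePred Q]
    (hdesc : ∀ a b : ℕ, P a b → a < b)
    (hQ : ∀ x : Fin n, Q x ↔ P ((x : ℕ) + 1) (((π x : Fin n) : ℕ) + 1)) :
    ((Finset.Icc 1 (n - 1)).filter fun i => P (wrd (tau π) i) (wrd (tau π) (i + 1))).card
      = (Finset.univ.filter Q).card := by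
  refine Finset.card_bij'
    (fun i hi => tau π ⟨i - 1, by
      simp only [Finset.mem_filter, Finset.mem_Icc] at hi; omega⟩)
    (fun x _ => (((tau π)⁻¹ x : Fin n) : ℕ) + 1) ?_ ?_ ?_ ?_
  · -- forward membership
    intro i hi
    simp only [Finset.mem_filter, Finset.mem_Icc] at hi
    obtain ⟨⟨hi1, hi2⟩, hP⟩ := hi
    have hn2 : 2 ≤ n := by omega
    have hja : i - 1 < n := by omega
    have hjb : i < n := by omega
    rw [wrd_eq (tau π) hi1 (by omega) hja,
        wrd_eq (tau π) (by omega) (by omega) (by omega : i + 1 - 1 < n)] at hP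
    have hmk : (⟨i + 1 - 1, by omega⟩ : Fin n) = ⟨i, hjb⟩ := Fin.ext (by simp)
    rw [hmk] at hP
    set x := tau π ⟨i - 1, hja⟩ with hx
    set y := tau π ⟨i, hjb⟩ with hy
    have hxy : (x : ℕ) < (y : ℕ) := by have := hdesc _ _ hP; omega
    have hnm : x ≠ Mx π x := by
      intro hmax
      have hlt : tau π ⟨i, hjb⟩ < tau π ⟨i - 1, hja⟩ :=
        tau_lt_of_max (by rw [← hx, ← hmax]) (Fin.lt_def.2 (by simp; omega))
      rw [← hx, ← hy] at hlt
      exact absurd (Fin.lt_def.1 hlt) (by omega)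
    have hjn : ((⟨i - 1, hja⟩ : Fin n) : ℕ) + 1 < n := by simp; omega
    have hy2 : tau π ⟨((⟨i - 1, hja⟩ : Fin n) : ℕ) + 1, hjn⟩ = π x := tau_succ hjn hnm
    have hmk2 : (⟨((⟨i - 1, hja⟩ : Fin n) : ℕ) + 1, hjn⟩ : Fin n) = ⟨i, hjb⟩ :=
      Fin.ext (by simp; omega)
    rw [hmk2] at hy2
    simp only [Finset.mem_filter, Finset.mem_univ, true_and]
    rw [hQ]
    rw [← hy2]
    exact hP
  · -- backward membership
    intro x hx
    simp only [Finset.mem_filter, Finset.mem_univ, true_and] at hx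
    rw [hQ] at hx
    have hxpi : (x : ℕ) < ((π x : Fin n) : ℕ) := by have := hdesc _ _ hx; omega
    have hnm : x ≠ Mx π x := by
      intro hmax
      have := apply_le_Mx π x
      rw [← hmax] at this
      omega
    set p := (tau π)⁻¹ x with hp
    have htp : tau π p = x := Equiv.Perm.eq_inv_iff_eq.mp rfl
    have hplt : (p : ℕ) < n - 1 := by
      have h1 := p.isLt
      rcases Nat.lt_or_ge (p : ℕ) (n - 1) with h | h
      · exact h
      · exfalso
        have hpe : p = ⟨n - 1, by omega⟩ := Fin.ext (by simp; omega)
        have := tau_last_max π (by omega)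
        rw [← hpe, htp] at this
        exact hnm this
    have hjn : (p : ℕ) + 1 < n := by omega
    have hy2 : tau π ⟨(p : ℕ) + 1, hjn⟩ = π x := by
      have h2 := tau_succ (π := π) (j := p) hjn (by rwa [htp])
      rwa [htp] at h2
    simp only [Finset.mem_filter, Finset.mem_Icc]
    refine ⟨⟨by omega, by omega⟩, ?_⟩
    rw [wrd_eq (tau π) (by omega) (by omega) (by omega : (p : ℕ) + 1 - 1 < n),
        wrd_eq (tau π) (by omega) (by omega) (by omega : (p : ℕ) + 1 + 1 - 1 < n)]
    have hmk1 : (⟨(p : ℕ) + 1 - 1, by omega⟩ : Fin n) = p := Fin.ext (by simp)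
    have hmk2 : (⟨(p : ℕ) + 1 + 1 - 1, by omega⟩ : Fin n) = (⟨(p : ℕ) + 1, hjn⟩ : Fin n) :=
      Fin.ext (by simp)
    rw [hmk1, hmk2, htp, hy2]
    exact hx
  · -- left inverse
    intro i hi
    simp only [Finset.mem_filter, Finset.mem_Icc] at hi
    rw [show ∀ (f : Equiv.Perm (Fin n)) y, f⁻¹ (f y) = y from fun f y => Equiv.Perm.inv_eq_iff_eq.mpr rfl]
    simp only [Fin.val_mk]
    omega
  · -- right inverse
    intro x hx
    have h : (⟨(((tau π)⁻¹ x : Fin n) : ℕ) + 1 - 1, by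
        have := ((tau π)⁻¹ x).isLt; omega⟩ : Fin n) = (tau π)⁻¹ x :=
      Fin.ext (by simp)
    rw [h, show ∀ (f : Equiv.Perm (Fin n)) y, f (f⁻¹ y) = y from fun f y => Equiv.Perm.eq_inv_iff_eq.mp rfl]

set_option maxHeartbeats 1600000 in
lemma tau_count_des (π : Equiv.Perm (Fin n)) (hn : 0 < n) :
    permDes (tau π)
      = (Finset.univ.filter fun x : Fin n => ((π x : Fin n) : ℕ) ≤ (x : ℕ)).card - 1 := by
  set z := tau π ⟨n - 1, by omega⟩ with hzdef
  have hz : z = Mx π z := tau_last_max π hn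
  have hzmem : z ∈ Finset.univ.filter fun x : Fin n => ((π x : Fin n) : ℕ) ≤ (x : ℕ) := by
    simp only [Finset.mem_filter, Finset.mem_univ, true_and]
    have h1 := apply_le_Mx π z
    have h2 : (Mx π z : ℕ) = (z : ℕ) := by rw [← hz]
    omega
  have hbij : permDes (tau π)
      = ((Finset.univ.filter fun x : Fin n => ((π x : Fin n) : ℕ) ≤ (x : ℕ)).erase z).card := by
    unfold permDes
    refine Finset.card_bij'
      (fun i hi => tau π ⟨i - 1, by
        simp only [Finset.mem_filter, Finset.mem_Icc] at hi; omega⟩)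
      (fun x _ => (((tau π)⁻¹ x : Fin n) : ℕ) + 1) ?_ ?_ ?_ ?_
    · intro i hi
      simp only [Finset.mem_filter, Finset.mem_Icc] at hi
      obtain ⟨⟨hi1, hi2⟩, hP⟩ := hi
      have hja : i - 1 < n := by omega
      have hjb : i < n := by omega
      rw [wrd_eq (tau π) hi1 (by omega) hja,
          wrd_eq (tau π) (by omega) (by omega) (by omega : i + 1 - 1 < n)] at hP
      have hmk : (⟨i + 1 - 1, by omega⟩ : Fin n) = (⟨i, hjb⟩ : Fin n) := Fin.ext (by simp)
      rw [hmk] at hP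
      rw [Finset.mem_erase]
      constructor
      · intro hcc
        rw [hzdef] at hcc
        have hv := congrArg Fin.val ((tau π).injective hcc)
        simp only [Fin.val_mk] at hv
        omega
      · simp only [Finset.mem_filter, Finset.mem_univ, true_and]
        set x := tau π ⟨i - 1, hja⟩ with hx
        by_cases hm : x = Mx π x
        · have h1 := apply_le_Mx π x
          rw [← hm] at h1
          omega
        · have hjn : ((⟨i - 1, hja⟩ : Fin n) : ℕ) + 1 < n := by simp; omega
          have hy2 := tau_succ hjn hm
          have hmk2 : (⟨((⟨i - 1, hja⟩ : Fin n) : ℕ) + 1, hjn⟩ : Fin n) = (⟨i, hjb⟩ : Fin n) :=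
            Fin.ext (by simp; omega)
          rw [hmk2] at hy2
          rw [← hy2]
          omega
    · intro x hx
      rw [Finset.mem_erase] at hx
      obtain ⟨hxz, hx2⟩ := hx
      simp only [Finset.mem_filter, Finset.mem_univ, true_and] at hx2
      set p := (tau π)⁻¹ x with hp
      have htp : tau π p = x := Equiv.Perm.eq_inv_iff_eq.mp rfl
      have hpne : (p : ℕ) ≠ n - 1 := by
        intro hcc
        apply hxz
        rw [hzdef, ← htp]
        congr 1
        exact Fin.ext (by simp [hcc])
      have hplt : (p : ℕ) < n - 1 := by have := p.isLt; omega
      have hjn : (p : ℕ) + 1 < n := by omega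
      have hylt : ((tau π ⟨(p : ℕ) + 1, hjn⟩ : Fin n) : ℕ) < (x : ℕ) := by
        by_cases hm : x = Mx π x
        · have hlm := tau_lt_of_max (π := π) (j := p) (j' := ⟨(p : ℕ) + 1, hjn⟩)
            (by rwa [htp]) (Fin.lt_def.2 (Nat.lt_succ_self _))
          rw [htp] at hlm
          exact Fin.lt_def.1 hlm
        · have hy2 := tau_succ (π := π) (j := p) hjn (by rwa [htp])
          rw [htp] at hy2
          rw [hy2]
          have hfix : ((π x : Fin n) : ℕ) ≠ (x : ℕ) := by
            intro hcc
            exact hm (Mx_fixed (Fin.ext hcc)).symm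
          omega
      simp only [Finset.mem_filter, Finset.mem_Icc]
      refine ⟨⟨by omega, by omega⟩, ?_⟩
      rw [wrd_eq (tau π) (by omega) (by omega) (by omega : (p : ℕ) + 1 - 1 < n),
          wrd_eq (tau π) (by omega) (by omega) (by omega : (p : ℕ) + 1 + 1 - 1 < n)]
      have hmk1 : (⟨(p : ℕ) + 1 - 1, by omega⟩ : Fin n) = p := Fin.ext (by simp)
      have hmk2 : (⟨(p : ℕ) + 1 + 1 - 1, by omega⟩ : Fin n) = (⟨(p : ℕ) + 1, hjn⟩ : Fin n) :=
        Fin.ext (by simp)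
      rw [hmk1, hmk2, htp]
      omega
    · intro i hi
      simp only [Finset.mem_filter, Finset.mem_Icc] at hi
      rw [show ∀ (f : Equiv.Perm (Fin n)) y, f⁻¹ (f y) = y from fun f y => Equiv.Perm.inv_eq_iff_eq.mpr rfl]
      simp only [Fin.val_mk]
      omega
    · intro x hx
      have hmk : (⟨(((tau π)⁻¹ x : Fin n) : ℕ) + 1 - 1, by
          have := ((tau π)⁻¹ x).isLt; omega⟩ : Fin n) = (tau π)⁻¹ x :=
        Fin.ext (by simp)
      rw [hmk, show ∀ (f : Equiv.Perm (Fin n)) y, f (f⁻¹ y) = y from fun f y => Equiv.Perm.eq_inv_iff_eq.mp rfl]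
  rw [hbij, Finset.card_erase_of_mem hzmem]

lemma PiOf_pred (σ : Equiv.Perm (Fin n)) {a : Fin n} (ha : 1 ≤ (a : ℕ)) (h : (a : ℕ) - 1 < n) :
    PiOf σ ⟨(a : ℕ) - 1, h⟩ = σ a := by
  rw [PiOf_mid σ (x := ⟨(a : ℕ) - 1, h⟩) (by simp; omega : ((⟨(a : ℕ) - 1, h⟩ : Fin n) : ℕ) + 1 < n)]
  congr 1
  exact Fin.ext (by simp; omega)

lemma sigma_suc (σ : Equiv.Perm (Fin n)) :
    permFixHat σ
      = (Finset.univ.filter fun x : Fin n => ((PiOf σ x : Fin n) : ℕ) = (x : ℕ) + 1).card := by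
  unfold permFixHat
  refine Finset.card_bij'
    (fun a ha => (⟨(a : ℕ) - 1, by have := a.isLt; omega⟩ : Fin n))
    (fun x hx => (⟨(x : ℕ) + 1, by
      simp only [Finset.mem_filter, Finset.mem_univ, true_and] at hx
      have := (PiOf σ x).isLt; omega⟩ : Fin n)) ?_ ?_ ?_ ?_
  · intro a ha
    simp only [Finset.mem_filter, Finset.mem_univ, true_and] at ha ⊢
    obtain ⟨ha1, ha2⟩ := ha
    rw [PiOf_pred σ ha1, ha2]
    show (a : ℕ) = (a : ℕ) - 1 + 1
    omega
  · intro x hx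
    simp only [Finset.mem_filter, Finset.mem_univ, true_and] at hx ⊢
    have hlt : (x : ℕ) + 1 < n := by have := (PiOf σ x).isLt; omega
    have := PiOf_mid σ (x := x) hlt
    constructor
    · simp
    · apply Fin.ext
      rw [← this]
      simp [hx]
  · intro a ha
    simp only [Finset.mem_filter, Finset.mem_univ, true_and] at ha
    exact Fin.ext (by simp; omega)
  · intro x hx
    exact Fin.ext (by simp)

lemma sigma_basc (σ : Equiv.Perm (Fin n)) :
    permExcHat σ
      = (Finset.univ.filter fun x : Fin n => (x : ℕ) + 2 ≤ ((PiOf σ x : Fin n) : ℕ)).card := by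
  unfold permExcHat
  refine Finset.card_bij'
    (fun a ha => (⟨(a : ℕ) - 1, by have := a.isLt; omega⟩ : Fin n))
    (fun x hx => (⟨(x : ℕ) + 1, by
      simp only [Finset.mem_filter, Finset.mem_univ, true_and] at hx
      have := (PiOf σ x).isLt; omega⟩ : Fin n)) ?_ ?_ ?_ ?_
  · intro a ha
    simp only [Finset.mem_filter, Finset.mem_univ, true_and] at ha ⊢
    obtain ⟨ha1, ha2⟩ := ha
    rw [PiOf_pred σ ha1]
    have := Fin.lt_def.1 ha2
    simp
    omega
  · intro x hx
    simp only [Finset.mem_filter, Finset.mem_univ, true_and] at hx ⊢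
    have hlt : (x : ℕ) + 1 < n := by have := (PiOf σ x).isLt; omega
    have hmid := PiOf_mid σ (x := x) hlt
    constructor
    · simp
    · rw [Fin.lt_def, ← hmid]
      simp
      omega
  · intro a ha
    simp only [Finset.mem_filter, Finset.mem_univ, true_and] at ha
    exact Fin.ext (by simp; omega)
  · intro x hx
    exact Fin.ext (by simp)

lemma sigma_des (σ : Equiv.Perm (Fin n)) (hn : 0 < n) :
    permDrop σ
      = (Finset.univ.filter fun x : Fin n => ((PiOf σ x : Fin n) : ℕ) ≤ (x : ℕ)).card - 1 := by
  have hlmem : (⟨n - 1, by omega⟩ : Fin n)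
      ∈ Finset.univ.filter fun x : Fin n => ((PiOf σ x : Fin n) : ℕ) ≤ (x : ℕ) := by
    simp only [Finset.mem_filter, Finset.mem_univ, true_and]
    have := (PiOf σ ⟨n - 1, by omega⟩).isLt
    simp
    omega
  have hbij : permDrop σ
      = ((Finset.univ.filter fun x : Fin n => ((PiOf σ x : Fin n) : ℕ) ≤ (x : ℕ)).erase
          (⟨n - 1, by omega⟩ : Fin n)).card := by
    unfold permDrop
    refine Finset.card_bij'
      (fun a ha => (⟨(a : ℕ) - 1, by have := a.isLt; omega⟩ : Fin n))
      (fun x hx => (⟨(x : ℕ) + 1, by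
        rw [Finset.mem_erase] at hx
        have h1 := x.isLt
        have h2 : (x : ℕ) ≠ n - 1 := fun hcc => hx.1 (Fin.ext (by simp [hcc]))
        omega⟩ : Fin n)) ?_ ?_ ?_ ?_
    · intro a ha
      simp only [Finset.mem_filter, Finset.mem_univ, true_and] at ha
      have ha' := Fin.lt_def.1 ha
      have ha1 : 1 ≤ (a : ℕ) := by omega
      rw [Finset.mem_erase]
      constructor
      · intro hcc
        have hv := congrArg Fin.val hcc
        have := a.isLt
        simp only [Fin.val_mk] at hv
        omega
      · simp only [Finset.mem_filter, Finset.mem_univ, true_and]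
        rw [PiOf_pred σ ha1]
        show ((σ a : Fin n) : ℕ) ≤ (a : ℕ) - 1
        omega
    · intro x hx
      rw [Finset.mem_erase] at hx
      obtain ⟨hxne, hx2⟩ := hx
      simp only [Finset.mem_filter, Finset.mem_univ, true_and] at hx2 ⊢
      have h2 : (x : ℕ) ≠ n - 1 := fun hcc => hxne (Fin.ext (by simp [hcc]))
      have hlt : (x : ℕ) + 1 < n := by have := x.isLt; omega
      have hmid := PiOf_mid σ (x := x) hlt
      rw [Fin.lt_def, ← hmid]
      simp
      omega
    · intro a ha
      simp only [Finset.mem_filter, Finset.mem_univ, true_and] at ha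
      have ha' := Fin.lt_def.1 ha
      exact Fin.ext (by simp; omega)
    · intro x hx
      exact Fin.ext (by simp)
  rw [hbij, Finset.card_erase_of_mem hlmem]

lemma first_letter (σ : Equiv.Perm (Fin n)) (hn : 0 < n) :
    wrd (tau (PiOf σ)) 1 = wrd σ 1 := by
  rw [wrd_eq _ le_rfl (by omega) (by omega : (1 : ℕ) - 1 < n),
      wrd_eq σ le_rfl (by omega) (by omega : (1 : ℕ) - 1 < n)]
  have h0 : (⟨1 - 1, by omega⟩ : Fin n) = (⟨0, hn⟩ : Fin n) := Fin.ext (by simp)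
  rw [h0, tau_zero (PiOf σ) hn, PiOf_last σ hn]

lemma block_le {π : Equiv.Perm (Fin n)} {j : Fin n}
    (hr : ∀ j', j < j' → tau π j' < tau π j) :
    (tau π)⁻¹ (π (tau π j)) ≤ j := by
  have hm : tau π j = Mx π (tau π j) := max_of_rec hr
  set x := tau π j with hx
  have hd0 : dist π (π x) = 0 := by
    have hda := dist_applyMx π x
    rw [← hm] at hda
    exact hda
  have hkle : key π (π x) ≤ key π x := by
    apply key_le_iff.2
    refine Or.inr ⟨?_, by omega⟩
    rw [Mx_apply]
  apply (key_tau_le_iff (π := π) (i := (tau π)⁻¹ (π x)) (j := j)).1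
  rw [show ∀ (f : Equiv.Perm (Fin n)) y, f (f⁻¹ y) = y from fun f y => Equiv.Perm.eq_inv_iff_eq.mp rfl]
  exact hkle

lemma block_prev {π : Equiv.Perm (Fin n)} {j : Fin n}
    (hr : ∀ j', j < j' → tau π j' < tau π j)
    (hp : 0 < (((tau π)⁻¹ (π (tau π j)) : Fin n) : ℕ))
    (hlt : (((tau π)⁻¹ (π (tau π j)) : Fin n) : ℕ) - 1 < n) :
    ∀ q', (⟨(((tau π)⁻¹ (π (tau π j)) : Fin n) : ℕ) - 1, hlt⟩ : Fin n) < q' →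
      tau π q' < tau π ⟨(((tau π)⁻¹ (π (tau π j)) : Fin n) : ℕ) - 1, hlt⟩ := by
  set x := tau π j with hx
  set p := (tau π)⁻¹ (π x) with hpdef
  have htp : tau π p = π x := Equiv.Perm.eq_inv_iff_eq.mp rfl
  have hple : p ≤ j := block_le hr
  have hqmax : tau π (⟨(p : ℕ) - 1, hlt⟩ : Fin n)
      = Mx π (tau π (⟨(p : ℕ) - 1, hlt⟩ : Fin n)) := by
    by_contra hqm
    have hqn : ((⟨(p : ℕ) - 1, hlt⟩ : Fin n) : ℕ) + 1 < n := by
      have := p.isLt; simp; omega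
    have hts := tau_succ (π := π) (j := (⟨(p : ℕ) - 1, hlt⟩ : Fin n)) hqn hqm
    have hmk : (⟨((⟨(p : ℕ) - 1, hlt⟩ : Fin n) : ℕ) + 1, hqn⟩ : Fin n) = p :=
      Fin.ext (by simp; omega)
    rw [hmk, htp] at hts
    have hxq : tau π (⟨(p : ℕ) - 1, hlt⟩ : Fin n) = x := π.injective hts.symm
    have hqj : (⟨(p : ℕ) - 1, hlt⟩ : Fin n) = j := (tau π).injective (by rw [hxq])
    have hv := congrArg Fin.val hqj
    have hj := Fin.le_def.1 hple
    simp only [Fin.val_mk] at hv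
    omega
  intro q' hq'
  exact tau_lt_of_max hqmax hq'

lemma block_norec {π : Equiv.Perm (Fin n)} {j : Fin n}
    (hr : ∀ j', j < j' → tau π j' < tau π j) :
    ∀ q : Fin n, (tau π)⁻¹ (π (tau π j)) ≤ q → q < j →
      ¬(∀ q', q < q' → tau π q' < tau π q) := by
  intro q hpq hqj hqrec
  set x := tau π j with hx
  set p := (tau π)⁻¹ (π x) with hpdef
  have htp : tau π p = π x := Equiv.Perm.eq_inv_iff_eq.mp rfl
  have hm : x = Mx π x := max_of_rec hr
  have hqm : tau π q = Mx π (tau π q) := max_of_rec hqrec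
  have h1 : key π (π x) ≤ key π (tau π q) := by
    rw [← htp]
    exact key_tau_le_iff.2 hpq
  have h2 : key π (tau π q) ≤ key π x := key_tau_le_iff.2 (le_of_lt hqj)
  have hM1 : (Mx π (tau π q) : ℕ) ≤ (Mx π (π x) : ℕ) := by
    rcases key_le_iff.1 h1 with hc | ⟨hc, _⟩ <;> omega
  have hM2 : (Mx π x : ℕ) ≤ (Mx π (tau π q) : ℕ) := by
    rcases key_le_iff.1 h2 with hc | ⟨hc, _⟩ <;> omega
  have hMA : (Mx π (π x) : ℕ) = (Mx π x : ℕ) := by rw [Mx_apply]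
  have hxval : (Mx π x : ℕ) = (x : ℕ) := (congrArg Fin.val hm).symm
  have htqx : tau π q = x := by
    rw [hqm]
    exact Fin.ext (by omega)
  have hqjeq : q = j := (tau π).injective (by rw [htqx])
  rw [hqjeq] at hqj
  exact lt_irrefl _ hqj

lemma tau_inj : Function.Injective (fun σ : Equiv.Perm (Fin n) => tau (PiOf σ)) := by
  intro σ1 σ2 h
  simp only at h
  have hpi : PiOf σ1 = PiOf σ2 := by
    apply Equiv.ext
    intro x0
    obtain ⟨j, rfl⟩ : ∃ j, tau (PiOf σ1) j = x0 :=
      ⟨(tau (PiOf σ1))⁻¹ x0, Equiv.Perm.eq_inv_iff_eq.mp rfl⟩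
    set π1 := PiOf σ1 with hπ1
    set π2 := PiOf σ2 with hπ2
    by_cases hr : ∀ j', j < j' → tau π1 j' < tau π1 j
    · have hr2 : ∀ j', j < j' → tau π2 j' < tau π2 j := by rw [← h]; exact hr
      set p1 := (tau π1)⁻¹ (π1 (tau π1 j)) with hp1
      set p2 := (tau π2)⁻¹ (π2 (tau π2 j)) with hp2
      have e1 : tau π1 p1 = π1 (tau π1 j) := Equiv.Perm.eq_inv_iff_eq.mp rfl
      have e2 : tau π2 p2 = π2 (tau π2 j) := Equiv.Perm.eq_inv_iff_eq.mp rfl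
      have hble1 : p1 ≤ j := block_le hr
      have hble2 : p2 ≤ j := block_le hr2
      have hpeq : p1 = p2 := by
        by_contra hne
        rcases lt_trichotomy p1 p2 with hlt | heq | hgt
        · have hp2pos : 0 < (p2 : ℕ) := by
            have := Fin.lt_def.1 hlt; omega
          have h1lt : (p2 : ℕ) - 1 < n := by have := p2.isLt; omega
          have hrecq := block_prev hr2 hp2pos h1lt
          have hrecq1 : ∀ q', (⟨(p2 : ℕ) - 1, h1lt⟩ : Fin n) < q' →
              tau π1 q' < tau π1 (⟨(p2 : ℕ) - 1, h1lt⟩ : Fin n) := by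
            rw [h]; exact hrecq
          exact block_norec hr (⟨(p2 : ℕ) - 1, h1lt⟩ : Fin n)
            (Fin.le_def.2 (by simp only [Fin.val_mk]; have := Fin.lt_def.1 hlt; omega))
            (Fin.lt_def.2 (by simp; have := Fin.le_def.1 hble2; have := Fin.lt_def.1 hlt; omega))
            hrecq1
        · exact hne heq
        · have hp1pos : 0 < (p1 : ℕ) := by
            have := Fin.lt_def.1 hgt; omega
          have h1lt : (p1 : ℕ) - 1 < n := by have := p1.isLt; omega
          have hrecq := block_prev hr hp1pos h1lt
          have hrecq2 : ∀ q', (⟨(p1 : ℕ) - 1, h1lt⟩ : Fin n) < q' →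
              tau π2 q' < tau π2 (⟨(p1 : ℕ) - 1, h1lt⟩ : Fin n) := by
            rw [← h]; exact hrecq
          exact block_norec hr2 (⟨(p1 : ℕ) - 1, h1lt⟩ : Fin n)
            (Fin.le_def.2 (by simp only [Fin.val_mk]; have := Fin.lt_def.1 hgt; omega))
            (Fin.lt_def.2 (by simp; have := Fin.le_def.1 hble1; have := Fin.lt_def.1 hgt; omega))
            hrecq2
      calc π1 (tau π1 j) = tau π1 p1 := e1.symm
        _ = tau π2 p2 := by rw [h, hpeq]
        _ = π2 (tau π2 j) := e2
        _ = π2 (tau π1 j) := by rw [← h]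
    · have hm1 : tau π1 j ≠ Mx π1 (tau π1 j) := fun hEq =>
        hr (fun j' hj' => tau_lt_of_max hEq hj')
      have hm2 : tau π2 j ≠ Mx π2 (tau π2 j) := fun hEq =>
        hr (by rw [h]; exact fun j' hj' => tau_lt_of_max hEq hj')
      have hjn : (j : ℕ) + 1 < n := by
        by_contra hcc
        apply hr
        intro j' hj'
        exfalso
        have h1 := Fin.lt_def.1 hj'
        have h2 := j'.isLt
        omega
      have t1 := tau_succ (π := π1) hjn hm1
      have t2 := tau_succ (π := π2) hjn hm2
      rw [← t1, h]
      exact t2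
  have hσ : σ1 = PiOf σ1 * (finRotate n)⁻¹ := by
    rw [PiOf, mul_inv_cancel_right]
  rw [hσ, hpi, PiOf, mul_inv_cancel_right]

lemma suc_eq (π : Equiv.Perm (Fin n)) :
    permSuc (tau π)
      = (Finset.univ.filter fun x : Fin n => ((π x : Fin n) : ℕ) = (x : ℕ) + 1).card := by
  have h := tau_count π (fun a b => b = a + 1)
    (fun x : Fin n => ((π x : Fin n) : ℕ) = (x : ℕ) + 1)
    (fun a b hab => by omega) (fun x => by omega)
  unfold permSuc
  exact h

lemma basc_eq (π : Equiv.Perm (Fin n)) :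
    permBasc (tau π)
      = (Finset.univ.filter fun x : Fin n => (x : ℕ) + 2 ≤ ((π x : Fin n) : ℕ)).card := by
  have h := tau_count π (fun a b => a + 2 ≤ b)
    (fun x : Fin n => (x : ℕ) + 2 ≤ ((π x : Fin n) : ℕ))
    (fun a b hab => by omega) (fun x => by omega)
  unfold permBasc
  exact h

end SuccBij

/-- There is a bijection φ on S_n fixing the first letter and sending
(exc-hat, drop, fix-hat) to (basc, des, suc). -/
theorem succession_bijection (n : ℕ) :
    ∃ φ : Equiv.Perm (Fin n) ≃ Equiv.Perm (Fin n),
      ∀ σ : Equiv.Perm (Fin n),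
        wrd (φ σ) 1 = wrd σ 1 ∧
        permExcHat σ = permBasc (φ σ) ∧
        permDrop σ = permDes (φ σ) ∧
        permFixHat σ = permSuc (φ σ) := by
  classical
  refine ⟨Equiv.ofBijective (fun σ => SuccBij.tau (SuccBij.PiOf σ))
      (Finite.injective_iff_bijective.mp SuccBij.tau_inj), fun σ => ?_⟩
  have hφ : (Equiv.ofBijective (fun σ => SuccBij.tau (SuccBij.PiOf σ))
      (Finite.injective_iff_bijective.mp SuccBij.tau_inj)) σ = SuccBij.tau (SuccBij.PiOf σ) := rfl
  rw [hφ]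
  rcases Nat.eq_zero_or_pos n with hn | hn
  · subst hn
    refine ⟨by simp [wrd], ?_, ?_, ?_⟩
    · unfold permExcHat permBasc
      rw [Finset.Icc_eq_empty (by omega)]
      simp
    · unfold permDrop permDes
      rw [Finset.Icc_eq_empty (by omega)]
      simp
    · unfold permFixHat permSuc
      rw [Finset.Icc_eq_empty (by omega)]
      simp
  · refine ⟨SuccBij.first_letter σ hn, ?_, ?_, ?_⟩
    · rw [SuccBij.sigma_basc σ, SuccBij.basc_eq (SuccBij.PiOf σ)]
    · rw [SuccBij.sigma_des σ hn, SuccBij.tau_count_des (SuccBij.PiOf σ) hn]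
    · rw [SuccBij.sigma_suc σ, SuccBij.suc_eq (SuccBij.PiOf σ)]
end

section
/- Define F_n(x,y,t|α) = Σ_{σ ∈ S_n} x^{exc-hat(σ)} y^{drop(σ)} t^{fix-hat(σ)} α^{cyc(σ)}, where exc-hat counts excedances at positions i ≥ 2, fix-hat counts fixed points i ≥ 2, drop counts drops, and cyc counts cycles. Then for every n ≥ 0, x · F_{n+1}(x,y,t|α) = A^{cyc}_{n+1}(x,y,t|α) + α(x−t) · A^{cyc}_n(x,y,t|α), where A^{cyc}_m(x,y,t|α) = Σ_{σ ∈ S_m} x^{exc σ} y^{drop σ} t^{fix σ} α^{cyc σ} and A^{cyc}_0 = 1. -/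
open Finset

def permFix {n : ℕ} (σ : Equiv.Perm (Fin n)) : ℕ :=
  (Finset.univ.filter fun i : Fin n => σ i = i).card

/-- number of cycles (including fixed points) -/
def permCyc {n : ℕ} (σ : Equiv.Perm (Fin n)) : ℕ :=
  σ.cycleType.card + permFix σ

/-- A_m^{cyc}(x,y,t|α) -/
def Acyc (R : Type*) [CommRing R] (x y t α : R) (m : ℕ) : R :=
  ∑ σ : Equiv.Perm (Fin m),
    x ^ permExc σ * y ^ permDrop σ * t ^ permFix σ * α ^ permCyc σ

/-- F_n(x,y,t|α) -/
def Fpoly (R : Type*) [CommRing R] (x y t α : R) (m : ℕ) : R :=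
  ∑ σ : Equiv.Perm (Fin m),
    x ^ permExcHat σ * y ^ permDrop σ * t ^ permFixHat σ * α ^ permCyc σ

/- ### Auxiliary material -/

namespace FAcycAux

variable {n : ℕ}

/-- Embed a permutation of `Fin n` into `Fin (n+1)` fixing `0`. -/
def emb (e : Equiv.Perm (Fin n)) : Equiv.Perm (Fin (n + 1)) :=
  e.extendDomain (finSuccAboveEquiv (0 : Fin (n + 1)))

lemma emb_zero (e : Equiv.Perm (Fin n)) : emb e 0 = 0 :=
  e.extendDomain_apply_not_subtype _ (by simp)

lemma emb_succ (e : Equiv.Perm (Fin n)) (j : Fin n) : emb e j.succ = (e j).succ := by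
  have h := e.extendDomain_apply_image (finSuccAboveEquiv (0 : Fin (n + 1))) j
  simpa [finSuccAboveEquiv_apply, Fin.zero_succAbove, emb] using h

lemma decomposeFin_symm_zero (e : Equiv.Perm (Fin n)) :
    Equiv.Perm.decomposeFin.symm ((0 : Fin (n + 1)), e) = emb e := by
  ext b
  refine Fin.cases ?_ (fun j => ?_) b
  · rw [Equiv.Perm.decomposeFin_symm_apply_zero, emb_zero]
  · rw [Equiv.Perm.decomposeFin_symm_apply_succ, emb_succ, Equiv.swap_self,
      Equiv.refl_apply]

lemma exc_split (τ : Equiv.Perm (Fin (n + 1))) :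
    permExc τ = (if 0 < τ 0 then 1 else 0) + permExcHat τ := by
  unfold permExc permExcHat
  rw [Finset.card_filter, Finset.card_filter, Fin.sum_univ_succ, Fin.sum_univ_succ]
  simp [Fin.val_succ, Nat.succ_le_succ (Nat.zero_le _)]

lemma fix_split (τ : Equiv.Perm (Fin (n + 1))) :
    permFix τ = (if τ 0 = 0 then 1 else 0) + permFixHat τ := by
  unfold permFix permFixHat
  rw [Finset.card_filter, Finset.card_filter, Fin.sum_univ_succ, Fin.sum_univ_succ]
  simp [Fin.val_succ, Nat.succ_le_succ (Nat.zero_le _)]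

lemma excHat_emb (e : Equiv.Perm (Fin n)) : permExcHat (emb e) = permExc e := by
  unfold permExcHat permExc
  rw [Finset.card_filter, Finset.card_filter, Fin.sum_univ_succ]
  simp [emb_succ, Fin.val_succ, Nat.succ_le_succ (Nat.zero_le _), Fin.succ_lt_succ_iff]

lemma fixHat_emb (e : Equiv.Perm (Fin n)) : permFixHat (emb e) = permFix e := by
  unfold permFixHat permFix
  rw [Finset.card_filter, Finset.card_filter, Fin.sum_univ_succ]
  simp [emb_succ, Fin.val_succ, Nat.succ_le_succ (Nat.zero_le _), Fin.succ_inj]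

lemma drop_emb (e : Equiv.Perm (Fin n)) : permDrop (emb e) = permDrop e := by
  unfold permDrop
  rw [Finset.card_filter, Finset.card_filter, Fin.sum_univ_succ]
  simp [emb_succ, emb_zero, Fin.succ_lt_succ_iff]

lemma fix_emb (e : Equiv.Perm (Fin n)) : permFix (emb e) = permFix e + 1 := by
  rw [fix_split, fixHat_emb, emb_zero, if_pos rfl, Nat.add_comm]

lemma cyc_emb (e : Equiv.Perm (Fin n)) : permCyc (emb e) = permCyc e + 1 := by
  unfold permCyc
  rw [fix_emb, emb, Equiv.Perm.cycleType_extendDomain]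
  omega

lemma sum_emb {R : Type*} [CommRing R] (g : Equiv.Perm (Fin (n + 1)) → R) :
    ∑ σ ∈ Finset.univ.filter (fun σ : Equiv.Perm (Fin (n + 1)) => σ 0 = 0), g σ =
      ∑ e : Equiv.Perm (Fin n), g (emb e) := by
  refine Finset.sum_bij' (fun σ _ => (Equiv.Perm.decomposeFin σ).2)
    (fun e _ => emb e) (fun σ _ => Finset.mem_univ _)
    (fun e _ => Finset.mem_filter.2 ⟨Finset.mem_univ _, emb_zero e⟩)
    (fun σ hσ => ?_) (fun e _ => ?_) (fun σ hσ => ?_)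
  · have h0 : σ 0 = 0 := (Finset.mem_filter.1 hσ).2
    have h1 : (Equiv.Perm.decomposeFin σ).1 = σ 0 := by
      conv_rhs => rw [← Equiv.Perm.decomposeFin.symm_apply_apply σ]
      rw [Equiv.Perm.decomposeFin_symm_apply_zero]
    show emb (Equiv.Perm.decomposeFin σ).2 = σ
    rw [← decomposeFin_symm_zero, ← h0, ← h1]
    exact Equiv.Perm.decomposeFin.symm_apply_apply σ
  · show (Equiv.Perm.decomposeFin (emb e)).2 = e
    rw [← decomposeFin_symm_zero, Equiv.apply_symm_apply]
  · have h0 : σ 0 = 0 := (Finset.mem_filter.1 hσ).2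
    have h1 : (Equiv.Perm.decomposeFin σ).1 = σ 0 := by
      conv_rhs => rw [← Equiv.Perm.decomposeFin.symm_apply_apply σ]
      rw [Equiv.Perm.decomposeFin_symm_apply_zero]
    have : emb (Equiv.Perm.decomposeFin σ).2 = σ := by
      rw [← decomposeFin_symm_zero, ← h0, ← h1]
      exact Equiv.Perm.decomposeFin.symm_apply_apply σ
    rw [this]

end FAcycAux

open FAcycAux in
/-- x·F_{n+1}(x,y,t|α) = A^{cyc}_{n+1}(x,y,t|α) + α(x−t)A^{cyc}_n(x,y,t|α). -/
theorem F_Acyc_relation (R : Type*) [CommRing R] (x y t α : R) (n : ℕ) :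
    x * Fpoly R x y t α (n + 1) =
      Acyc R x y t α (n + 1) + α * (x - t) * Acyc R x y t α n := by
  classical
  set p : Equiv.Perm (Fin (n + 1)) → Prop := fun σ => σ 0 = 0 with hp
  have hF : x * Fpoly R x y t α (n + 1) =
      (∑ σ ∈ Finset.univ.filter p,
        x * (x ^ permExcHat σ * y ^ permDrop σ * t ^ permFixHat σ * α ^ permCyc σ)) +
      (∑ σ ∈ Finset.univ.filter (fun σ => ¬ p σ),
        x * (x ^ permExcHat σ * y ^ permDrop σ * t ^ permFixHat σ * α ^ permCyc σ)) := by
    rw [Fpoly, Finset.mul_sum, ← Finset.sum_filter_add_sum_filter_not Finset.univ p]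
  have hA : Acyc R x y t α (n + 1) =
      (∑ σ ∈ Finset.univ.filter p,
        x ^ permExc σ * y ^ permDrop σ * t ^ permFix σ * α ^ permCyc σ) +
      (∑ σ ∈ Finset.univ.filter (fun σ => ¬ p σ),
        x ^ permExc σ * y ^ permDrop σ * t ^ permFix σ * α ^ permCyc σ) := by
    rw [Acyc, ← Finset.sum_filter_add_sum_filter_not Finset.univ p]
  -- on the complement the two summands agree
  have hcomp : ∀ σ ∈ Finset.univ.filter (fun σ => ¬ p σ),
      x * (x ^ permExcHat σ * y ^ permDrop σ * t ^ permFixHat σ * α ^ permCyc σ) =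
      x ^ permExc σ * y ^ permDrop σ * t ^ permFix σ * α ^ permCyc σ := by
    intro σ hσ
    have h0 : ¬ p σ := (Finset.mem_filter.1 hσ).2
    have hpos : 0 < σ 0 := Fin.pos_of_ne_zero h0
    rw [exc_split, fix_split, if_pos hpos, if_neg h0]
    ring
  -- on the filter part
  have hS1 : ∑ σ ∈ Finset.univ.filter p,
      x * (x ^ permExcHat σ * y ^ permDrop σ * t ^ permFixHat σ * α ^ permCyc σ) =
      ∑ e : Equiv.Perm (Fin n),
        x * (x ^ permExc e * y ^ permDrop e * t ^ permFix e * α ^ (permCyc e + 1)) := by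
    rw [sum_emb]
    exact Finset.sum_congr rfl fun e _ => by
      rw [excHat_emb, fixHat_emb, drop_emb, cyc_emb]
  have hS2 : ∑ σ ∈ Finset.univ.filter p,
      x ^ permExc σ * y ^ permDrop σ * t ^ permFix σ * α ^ permCyc σ =
      ∑ e : Equiv.Perm (Fin n),
        x ^ permExc e * y ^ permDrop e * t ^ (permFix e + 1) * α ^ (permCyc e + 1) := by
    rw [sum_emb]
    refine Finset.sum_congr rfl fun e _ => ?_
    have h0 : p (emb e) := emb_zero e
    rw [exc_split, fix_split, if_neg (by simp [h0, emb_zero]), if_pos h0, excHat_emb, fixHat_emb,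
      drop_emb, cyc_emb]
    simp [Nat.add_comm]
  rw [hF, hA, Finset.sum_congr rfl hcomp, hS1, hS2, Acyc, Finset.mul_sum]
  have : ∀ e : Equiv.Perm (Fin n),
      x * (x ^ permExc e * y ^ permDrop e * t ^ permFix e * α ^ (permCyc e + 1)) =
      x ^ permExc e * y ^ permDrop e * t ^ (permFix e + 1) * α ^ (permCyc e + 1) +
      α * (x - t) * (x ^ permExc e * y ^ permDrop e * t ^ permFix e * α ^ permCyc e) := by
    intro e; rw [pow_succ, pow_succ]; ring
  rw [Finset.sum_congr rfl fun e _ => this e, Finset.sum_add_distrib]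
  ring
end

section
/- For nonnegative integers a, b with n = a+b, the identity Σ_{k≥0} (αt)^{a+b−k} C(a+b, k) ⟨k, a⟩_{α,t} = Σ_{k≥0} (αt)^{a+b−k} C(a+b, k) ⟨k, b⟩_{α,t} holds, where ⟨n,k⟩_{α,t} = Σ over σ ∈ S_n with exc(σ) = n−k of α^{cyc(σ)} t^{fix(σ)}, and ⟨0,k⟩_{α,t} = ⟨k,0⟩_{α,t} = δ_{k,0}. -/
open Finset

/-- The (α,t)-Eulerian number ⟨n,k⟩_{α,t} = Σ_{σ ∈ S_n, exc σ = n−k} α^{cyc σ} t^{fix σ}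
(the condition is stated as exc σ + k = n, so that ⟨0,k⟩ = ⟨k,0⟩ = δ_{k,0}). -/
def eulerAT (R : Type*) [CommRing R] (α t : R) (n k : ℕ) : R :=
  ∑ σ ∈ Finset.univ.filter (fun σ : Equiv.Perm (Fin n) => permExc σ + k = n),
    α ^ permCyc σ * t ^ permFix σ

namespace SymEuler

variable {n : ℕ} (S : Finset (Fin n))

noncomputable def fEq : Fin S.card ≃ {x // x ∈ S} := (S.orderIsoOfFin rfl).toEquiv

lemma fEq_lt_iff (j j' : Fin S.card) : (↑(fEq S j) : Fin n) < ↑(fEq S j') ↔ j < j' := by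
  rw [Subtype.coe_lt_coe]; exact (S.orderIsoOfFin rfl).lt_iff_lt

lemma ext_apply (τ : Equiv.Perm (Fin S.card)) (j : Fin S.card) :
    (τ.extendDomain (fEq S)) ↑(fEq S j) = ↑(fEq S (τ j)) := by
  rw [Equiv.Perm.extendDomain_apply_subtype _ _ (fEq S j).2]
  simp

lemma ext_not_mem (τ : Equiv.Perm (Fin S.card)) {x : Fin n} (hx : x ∉ S) :
    (τ.extendDomain (fEq S)) x = x :=
  Equiv.Perm.extendDomain_apply_not_subtype _ _ hx

lemma permExc_ext (τ : Equiv.Perm (Fin S.card)) :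
    permExc (τ.extendDomain (fEq S)) = permExc τ := by
  unfold permExc
  refine (Finset.card_bij (fun j _ => (↑(fEq S j) : Fin n)) ?_ ?_ ?_).symm
  · intro j hj
    simp only [mem_filter, mem_univ, true_and] at hj ⊢
    rw [ext_apply, fEq_lt_iff]; exact hj
  · intro j1 h1 j2 h2 hEq
    have := Subtype.ext hEq
    exact (fEq S).injective this
  · intro x hx
    simp only [mem_filter, mem_univ, true_and] at hx
    have hxS : x ∈ S := by
      by_contra hxS
      rw [ext_not_mem S τ hxS] at hx; exact lt_irrefl _ hx
    refine ⟨(fEq S).symm ⟨x, hxS⟩, ?_, by simp⟩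
    simp only [mem_filter, mem_univ, true_and]
    have h1 : (↑(fEq S ((fEq S).symm ⟨x, hxS⟩)) : Fin n) = x := by simp
    rw [← fEq_lt_iff S, h1]
    rw [← h1, ext_apply, h1] at hx
    exact hx

lemma fix_card_split (σ : Equiv.Perm (Fin n)) (hout : ∀ x ∉ S, σ x = x) :
    permFix σ = (S.filter fun x => σ x = x).card + (n - S.card) := by
  unfold permFix
  have hsplit : (Finset.univ.filter fun x : Fin n => σ x = x)
      = (S.filter fun x => σ x = x) ∪ Sᶜ := by
    ext x
    simp only [mem_filter, mem_union, mem_univ, true_and, mem_compl]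
    by_cases hx : x ∈ S
    · simp [hx]
    · simp [hx, hout x hx]
  rw [hsplit, card_union_of_disjoint, card_compl]
  · simp
  · rw [Finset.disjoint_right]
    intro x hx hx2
    exact (mem_compl.mp hx) (mem_of_mem_filter x hx2)

lemma permFix_ext (τ : Equiv.Perm (Fin S.card)) :
    permFix (τ.extendDomain (fEq S)) = permFix τ + (n - S.card) := by
  rw [fix_card_split S _ (fun x hx => ext_not_mem S τ hx)]
  congr 1
  unfold permFix
  refine (Finset.card_bij (fun j _ => (↑(fEq S j) : Fin n)) ?_ ?_ ?_).symm
  · intro j hj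
    simp only [mem_filter, mem_univ, true_and] at hj
    simp only [mem_filter]
    refine ⟨(fEq S j).2, ?_⟩
    rw [ext_apply, hj]
  · intro j1 h1 j2 h2 hEq
    exact (fEq S).injective (Subtype.ext hEq)
  · intro x hx
    simp only [mem_filter] at hx
    obtain ⟨hxS, hfix⟩ := hx
    refine ⟨(fEq S).symm ⟨x, hxS⟩, ?_, by simp⟩
    simp only [mem_filter, mem_univ, true_and]
    apply (fEq S).injective
    apply Subtype.ext
    have h1 : (↑(fEq S ((fEq S).symm ⟨x, hxS⟩)) : Fin n) = x := by simp
    rw [← ext_apply, h1, hfix]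

lemma permCyc_ext (τ : Equiv.Perm (Fin S.card)) :
    permCyc (τ.extendDomain (fEq S)) = permCyc τ + (n - S.card) := by
  unfold permCyc
  rw [Equiv.Perm.cycleType_extendDomain, permFix_ext, Nat.add_assoc]



lemma mem_iff_mem (σ : Equiv.Perm (Fin n)) (hout : ∀ x ∉ S, σ x = x) (x : Fin n) :
    x ∈ S ↔ σ x ∈ S := by
  constructor
  · intro hx
    by_contra h
    have h2 := hout (σ x) h
    have := σ.injective h2
    rw [this] at h
    exact h hx
  · intro hx
    by_contra h
    rw [hout x h] at hx
    exact h hx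

noncomputable def restr (σ : Equiv.Perm (Fin n)) (hout : ∀ x ∉ S, σ x = x) :
    Equiv.Perm (Fin S.card) :=
  ((fEq S).symm).permCongr (σ.subtypePerm (fun x => (mem_iff_mem S σ hout x).symm))

lemma ext_restr (σ : Equiv.Perm (Fin n)) (hout : ∀ x ∉ S, σ x = x) :
    (restr S σ hout).extendDomain (fEq S) = σ := by
  ext x
  by_cases hx : x ∈ S
  · rw [Equiv.Perm.extendDomain_apply_subtype _ _ hx]
    simp [restr, Equiv.permCongr_apply, Equiv.Perm.subtypePerm_apply]
  · rw [Equiv.Perm.extendDomain_apply_not_subtype _ _ hx, hout x hx]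

lemma restr_ext (τ : Equiv.Perm (Fin S.card)) (hout : ∀ x ∉ S, (τ.extendDomain (fEq S)) x = x) :
    restr S (τ.extendDomain (fEq S)) hout = τ := by
  refine Equiv.ext fun j => ?_
  simp only [restr, Equiv.permCongr_apply, Equiv.Perm.subtypePerm_apply]
  apply (fEq S).injective
  rw [Equiv.apply_symm_apply]
  apply Subtype.ext
  simp only [Equiv.symm_symm]
  rw [Equiv.Perm.extendDomain_apply_subtype _ _ (fEq S j).2]
  simp


variable (R : Type*) [CommRing R] (α t : R)

lemma sum_ext_eq (a : ℕ) :
    (α * t) ^ (n - S.card) * eulerAT R α t S.card a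
      = ∑ σ ∈ Finset.univ.filter
          (fun σ : Equiv.Perm (Fin n) => (∀ x ∉ S, σ x = x) ∧ permExc σ + a = S.card),
          α ^ permCyc σ * t ^ permFix σ := by
  unfold eulerAT
  rw [Finset.mul_sum]
  refine Finset.sum_bij' (fun τ _ => τ.extendDomain (fEq S))
    (fun σ hσ => restr S σ (fun x hx => ((Finset.mem_filter.mp hσ).2).1 x hx)) ?_ ?_ ?_ ?_ ?_
  · intro τ hτ
    simp only [mem_filter, mem_univ, true_and] at hτ ⊢
    exact ⟨fun x hx => ext_not_mem S τ hx, by rw [permExc_ext]; exact hτ⟩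
  · intro σ hσ
    simp only [mem_filter, mem_univ, true_and] at hσ ⊢
    have h2 := permExc_ext S (restr S σ (fun x hx => hσ.1 x hx))
    rw [ext_restr] at h2
    rw [← h2]
    exact hσ.2
  · intro τ hτ
    exact restr_ext S τ _
  · intro σ hσ
    exact ext_restr S σ _
  · intro τ hτ
    rw [permCyc_ext, permFix_ext, pow_add, pow_add, mul_pow]
    ring


def cnt (a : ℕ) {n : ℕ} (σ : Equiv.Perm (Fin n)) : ℕ :=
  (((Finset.univ.filter fun i : Fin n => σ i = i)).powerset.filter
      fun M => M.card + permExc σ + a = n).card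

lemma range_sum_eq (a : ℕ) :
    (∑ k ∈ Finset.range (n + 1),
        (α * t) ^ (n - k) * (n.choose k : R) * eulerAT R α t k a)
      = ∑ σ : Equiv.Perm (Fin n), (cnt a σ : R) * (α ^ permCyc σ * t ^ permFix σ) := by
  have step1 : (∑ k ∈ Finset.range (n + 1),
        (α * t) ^ (n - k) * (n.choose k : R) * eulerAT R α t k a)
      = ∑ k ∈ Finset.range (n + 1), ∑ S ∈ Finset.powersetCard k (Finset.univ : Finset (Fin n)),
          ∑ σ ∈ Finset.univ.filter
            (fun σ : Equiv.Perm (Fin n) => (∀ x ∉ S, σ x = x) ∧ permExc σ + a = S.card),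
            α ^ permCyc σ * t ^ permFix σ := by
    refine Finset.sum_congr rfl fun k hk => ?_
    have h : ∀ S ∈ Finset.powersetCard k (Finset.univ : Finset (Fin n)),
        (∑ σ ∈ Finset.univ.filter
            (fun σ : Equiv.Perm (Fin n) => (∀ x ∉ S, σ x = x) ∧ permExc σ + a = S.card),
            α ^ permCyc σ * t ^ permFix σ)
          = (α * t) ^ (n - k) * eulerAT R α t k a := fun S hS => by
      have hc : S.card = k := (Finset.mem_powersetCard.mp hS).2
      rw [← sum_ext_eq, hc]
    rw [Finset.sum_congr rfl h, Finset.sum_const, Finset.card_powersetCard, card_univ,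
      Fintype.card_fin, nsmul_eq_mul]
    ring
  rw [step1]
  have hpp := Finset.sum_powerset (Finset.univ : Finset (Fin n))
    (fun S => ∑ σ ∈ Finset.univ.filter
        (fun σ : Equiv.Perm (Fin n) => (∀ x ∉ S, σ x = x) ∧ permExc σ + a = S.card),
        α ^ permCyc σ * t ^ permFix σ)
  simp only [card_univ, Fintype.card_fin] at hpp
  rw [← hpp]
  have hswap : ∀ S ∈ (Finset.univ : Finset (Fin n)).powerset,
      (∑ σ ∈ Finset.univ.filter
          (fun σ : Equiv.Perm (Fin n) => (∀ x ∉ S, σ x = x) ∧ permExc σ + a = S.card),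
          α ^ permCyc σ * t ^ permFix σ)
        = ∑ σ : Equiv.Perm (Fin n),
            (if (∀ x ∉ S, σ x = x) ∧ permExc σ + a = S.card
              then α ^ permCyc σ * t ^ permFix σ else 0) := fun S _ =>
    Finset.sum_filter _ _
  rw [Finset.sum_congr rfl hswap, Finset.sum_comm]
  refine Finset.sum_congr rfl fun σ _ => ?_
  rw [← Finset.sum_filter, Finset.sum_const, nsmul_eq_mul]
  congr 2
  unfold cnt
  refine Finset.card_bij' (fun S _ => Sᶜ) (fun M _ => Mᶜ) ?_ ?_ ?_ ?_
  · intro S hS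
    simp only [Finset.mem_filter, Finset.mem_powerset] at hS ⊢
    obtain ⟨-, hout, hexc⟩ := hS
    have hcard : S.card ≤ n := by
      have := Finset.card_le_card (Finset.subset_univ S)
      simpa using this
    refine ⟨?_, ?_⟩
    · intro x hx
      simp only [Finset.mem_compl] at hx
      simp only [Finset.mem_filter, Finset.mem_univ, true_and]
      exact hout x hx
    · have : Sᶜ.card = n - S.card := by
        rw [Finset.card_compl]; simp
      omega
  · intro M hM
    simp only [Finset.mem_filter, Finset.mem_powerset] at hM ⊢
    obtain ⟨hsub, hcond⟩ := hM
    have hcard : M.card ≤ n := by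
      have := Finset.card_le_card (Finset.subset_univ M)
      simpa using this
    refine ⟨Finset.subset_univ _, ?_, ?_⟩
    · intro x hx
      simp only [Finset.mem_compl, not_not] at hx
      have := hsub hx
      simp only [Finset.mem_filter] at this
      exact this.2
    · have : Mᶜ.card = n - M.card := by
        rw [Finset.card_compl]; simp
      omega
  · intro S _; exact compl_compl S
  · intro M _; exact compl_compl M


lemma fix_filter_inv (σ : Equiv.Perm (Fin n)) :
    (Finset.univ.filter fun i : Fin n => σ⁻¹ i = i)
      = (Finset.univ.filter fun i : Fin n => σ i = i) := by
  ext x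
  simp only [Finset.mem_filter, Finset.mem_univ, true_and]
  constructor
  · intro h; conv_lhs => rw [← h]
    simp
  · intro h; conv_lhs => rw [← h]
    simp

lemma permFix_inv (σ : Equiv.Perm (Fin n)) : permFix σ⁻¹ = permFix σ := by
  unfold permFix; rw [fix_filter_inv]

lemma permCyc_inv (σ : Equiv.Perm (Fin n)) : permCyc σ⁻¹ = permCyc σ := by
  unfold permCyc; rw [Equiv.Perm.cycleType_inv, permFix_inv]

lemma permExc_inv (σ : Equiv.Perm (Fin n)) :
    permExc σ⁻¹ = (Finset.univ.filter fun i : Fin n => σ i < i).card := by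
  unfold permExc
  refine Finset.card_bij (fun x _ => σ⁻¹ x) ?_ ?_ ?_
  · intro x hx
    simp only [Finset.mem_filter, Finset.mem_univ, true_and] at hx ⊢
    rwa [← Equiv.Perm.mul_apply, mul_inv_cancel, Equiv.Perm.one_apply]
  · intro x1 _ x2 _ h
    exact (Equiv.injective σ⁻¹) h
  · intro y hy
    simp only [Finset.mem_filter, Finset.mem_univ, true_and] at hy
    exact ⟨σ y, by simp only [Finset.mem_filter, Finset.mem_univ, true_and,
      ← Equiv.Perm.mul_apply, inv_mul_cancel, Equiv.Perm.one_apply]; exact hy, by simp⟩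

lemma exc_inv_add (σ : Equiv.Perm (Fin n)) :
    permExc σ⁻¹ + permExc σ + permFix σ = n := by
  rw [permExc_inv]
  have h1 := Finset.card_filter_add_card_filter_not
    (s := (Finset.univ : Finset (Fin n))) (p := fun i => i < σ i)
  have h2 : (Finset.univ.filter fun i : Fin n => ¬ i < σ i)
      = (Finset.univ.filter fun i : Fin n => σ i < i)
        ∪ (Finset.univ.filter fun i : Fin n => σ i = i) := by
    ext x
    simp only [Finset.mem_filter, Finset.mem_univ, true_and, Finset.mem_union, not_lt]
    constructor
    · intro h
      rcases lt_or_eq_of_le h with h' | h'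
      · exact Or.inl h'
      · exact Or.inr h'
    · rintro (h | h)
      · exact le_of_lt h
      · exact le_of_eq h
  have h3 : Disjoint (Finset.univ.filter fun i : Fin n => σ i < i)
      (Finset.univ.filter fun i : Fin n => σ i = i) := by
    rw [Finset.disjoint_left]
    intro x hx1 hx2
    simp only [Finset.mem_filter, Finset.mem_univ, true_and] at hx1 hx2
    rw [hx2] at hx1
    exact lt_irrefl _ hx1
  rw [h2, Finset.card_union_of_disjoint h3] at h1
  simp only [Finset.card_univ, Fintype.card_fin] at h1
  unfold permExc permFix
  omega

lemma cnt_inv (a b : ℕ) (hab : a + b = n) (σ : Equiv.Perm (Fin n)) :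
    cnt a σ⁻¹ = cnt b σ := by
  unfold cnt
  rw [fix_filter_inv]
  set F := (Finset.univ.filter fun i : Fin n => σ i = i) with hF
  have hFcard : F.card = permFix σ := rfl
  have hkey := exc_inv_add σ
  refine Finset.card_bij' (fun M _ => F \ M) (fun M _ => F \ M) ?_ ?_ ?_ ?_
  · intro M hM
    simp only [Finset.mem_filter, Finset.mem_powerset] at hM ⊢
    obtain ⟨hsub, hcond⟩ := hM
    have hle : M.card ≤ F.card := Finset.card_le_card hsub
    refine ⟨Finset.sdiff_subset, ?_⟩
    rw [Finset.card_sdiff_of_subset hsub]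
    omega
  · intro M hM
    simp only [Finset.mem_filter, Finset.mem_powerset] at hM ⊢
    obtain ⟨hsub, hcond⟩ := hM
    have hle : M.card ≤ F.card := Finset.card_le_card hsub
    refine ⟨Finset.sdiff_subset, ?_⟩
    rw [Finset.card_sdiff_of_subset hsub]
    omega
  · intro M hM
    simp only [Finset.mem_filter, Finset.mem_powerset] at hM
    exact Finset.sdiff_sdiff_eq_self hM.1
  · intro M hM
    simp only [Finset.mem_filter, Finset.mem_powerset] at hM
    exact Finset.sdiff_sdiff_eq_self hM.1

lemma middle_symm (a b : ℕ) (hab : a + b = n) :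
    (∑ σ : Equiv.Perm (Fin n), (cnt a σ : R) * (α ^ permCyc σ * t ^ permFix σ))
      = ∑ σ : Equiv.Perm (Fin n), (cnt b σ : R) * (α ^ permCyc σ * t ^ permFix σ) := by
  refine Fintype.sum_equiv (Equiv.inv (Equiv.Perm (Fin n))) _ _ fun σ => ?_
  simp only [Equiv.inv_apply]
  rw [permCyc_inv, permFix_inv, cnt_inv b a (by omega) σ]

end SymEuler

/-- The symmetric (α,t)-Eulerian identity:
Σ_k (αt)^{a+b−k} C(a+b,k) ⟨k,a⟩_{α,t} = Σ_k (αt)^{a+b−k} C(a+b,k) ⟨k,b⟩_{α,t}. -/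
theorem symmetric_alpha_t_eulerian_identity (a b : ℕ)
    (R : Type*) [CommRing R] (α t : R) :
    (∑ k ∈ Finset.range (a + b + 1),
        (α * t) ^ (a + b - k) * ((a + b).choose k : R) * eulerAT R α t k a) =
      ∑ k ∈ Finset.range (a + b + 1),
        (α * t) ^ (a + b - k) * ((a + b).choose k : R) * eulerAT R α t k b := by
  rw [SymEuler.range_sum_eq, SymEuler.range_sum_eq]
  exact SymEuler.middle_symm R α t a b rfl
end
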